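/- arXiv:2307.12743 — 9 statements merged into one kernel-verified Lean document; each statement's English description precedes it below -/
import Mathlib

section
/- The Beltrami–Klein distance dominates the Euclidean distance: for all x, y in the open unit ball of ℝ^d, d_K(x,y) ≥ ‖x − y‖. -/
open scoped RealInnerProductSpace
open Metric MeasureTheory

/-- Inverse hyperbolic cosine. -/
noncomputable def arccosh (x : ℝ) : ℝ := Real.log (x + Real.sqrt (x ^ 2 - 1))

/-- Inverse hyperbolic tangent. -/
noncomputable def arctanh (x : ℝ) : ℝ := Real.log ((1 + x) / (1 - x)) / 2

/-- The Beltrami–Klein distance on the open unit ball of `ℝ^d`. -/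
noncomputable def kleinDist {d : ℕ} (x y : EuclideanSpace ℝ (Fin d)) : ℝ :=
  arccosh ((1 - ⟪x, y⟫) / (Real.sqrt (1 - ‖x‖ ^ 2) * Real.sqrt (1 - ‖y‖ ^ 2)))

private lemma aux_cosh_le_two {x : ℝ} (h0 : 0 ≤ x) (h1 : x ≤ 1) : Real.cosh x ≤ 2 := by
  have h : Real.cosh x ≤ Real.cosh 1 :=
    Real.cosh_le_cosh.2 (by rwa [abs_of_nonneg h0, abs_one])
  have he : Real.exp 1 < 2.7182818286 := Real.exp_one_lt_d9
  have he2 : Real.exp (-1) ≤ 1 := Real.exp_le_one_iff.2 (by norm_num)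
  have hc1 : Real.cosh 1 = (Real.exp 1 + Real.exp (-1)) / 2 := Real.cosh_eq 1
  rw [hc1] at h
  norm_num at h ⊢
  linarith

private lemma aux_sinh_le_two_mul {x : ℝ} (h0 : 0 ≤ x) (h1 : x ≤ 1) :
    Real.sinh x ≤ 2 * x := by
  have key : MonotoneOn (fun y => 2 * y - Real.sinh y) (Set.Icc (0:ℝ) 1) := by
    apply monotoneOn_of_deriv_nonneg (convex_Icc 0 1)
    · exact ((continuous_const.mul continuous_id).sub Real.continuous_sinh).continuousOn
    · exact (((differentiable_id.const_mul 2).sub Real.differentiable_sinh)).differentiableOn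
    · intro y hy
      rw [interior_Icc] at hy
      have hd : HasDerivAt (fun y : ℝ => 2 * y - Real.sinh y) (2 - Real.cosh y) y := by
        simpa [Pi.sub_def] using ((hasDerivAt_id y).const_mul 2).sub (Real.hasDerivAt_sinh y)
      rw [hd.deriv]
      have := aux_cosh_le_two hy.1.le hy.2.le
      linarith
  have h := key (Set.left_mem_Icc.2 zero_le_one) (Set.mem_Icc.2 ⟨h0, h1⟩) h0
  simpa using h

private lemma aux_cosh_le {x : ℝ} (h0 : 0 ≤ x) (h1 : x ≤ 1) :
    Real.cosh x ≤ 1 + x ^ 2 := by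
  have key : MonotoneOn (fun y => 1 + y ^ 2 - Real.cosh y) (Set.Icc (0:ℝ) 1) := by
    apply monotoneOn_of_deriv_nonneg (convex_Icc 0 1)
    · exact ((continuous_const.add (continuous_pow 2)).sub Real.continuous_cosh).continuousOn
    · exact ((differentiable_const _).add (differentiable_pow 2)).sub
        Real.differentiable_cosh |>.differentiableOn
    · intro y hy
      rw [interior_Icc] at hy
      have hd : HasDerivAt (fun y : ℝ => 1 + y ^ 2 - Real.cosh y) (2 * y - Real.sinh y) y := by
        have := ((hasDerivAt_pow 2 y).const_add 1).sub (Real.hasDerivAt_cosh y)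
        simpa [Pi.sub_def] using this
      rw [hd.deriv]
      have := aux_sinh_le_two_mul hy.1.le hy.2.le
      linarith
  have h := key (Set.left_mem_Icc.2 zero_le_one) (Set.mem_Icc.2 ⟨h0, h1⟩) h0
  simp only [Real.cosh_zero] at h
  nlinarith [h]

private lemma aux_sinh_le {x : ℝ} (h0 : 0 ≤ x) (h1 : x ≤ 1) :
    Real.sinh x ≤ x + x ^ 3 / 3 := by
  have key : MonotoneOn (fun y => y + y ^ 3 / 3 - Real.sinh y) (Set.Icc (0:ℝ) 1) := by
    apply monotoneOn_of_deriv_nonneg (convex_Icc 0 1)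
    · exact ((continuous_id.add ((continuous_pow 3).div_const 3)).sub
        Real.continuous_sinh).continuousOn
    · exact ((differentiable_id.add ((differentiable_pow 3).div_const 3)).sub
        Real.differentiable_sinh).differentiableOn
    · intro y hy
      rw [interior_Icc] at hy
      have hd : HasDerivAt (fun y : ℝ => y + y ^ 3 / 3 - Real.sinh y)
          (1 + y ^ 2 - Real.cosh y) y := by
        have := ((hasDerivAt_id y).add ((hasDerivAt_pow 3 y).div_const 3)).sub
          (Real.hasDerivAt_sinh y)
        exact this.congr_deriv (by ring)
      rw [hd.deriv]
      have := aux_cosh_le hy.1.le hy.2.le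
      linarith
  have h := key (Set.left_mem_Icc.2 zero_le_one) (Set.mem_Icc.2 ⟨h0, h1⟩) h0
  simpa using h

set_option maxHeartbeats 1000000 in
private lemma aux_key (a b r c : ℝ) (ha0 : 0 ≤ a) (ha : a < 1) (hb0 : 0 ≤ b) (hb : b < 1)
    (hr0 : 0 ≤ r) (hrab : r ≤ a + b) (hinner : r ^ 2 = a ^ 2 - 2 * c + b ^ 2) :
    Real.sqrt (1 - a ^ 2) * Real.sqrt (1 - b ^ 2) * Real.cosh r ≤ 1 - c := by
  set u : ℝ := Real.sqrt (1 - a ^ 2) with hu_def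
  set v : ℝ := Real.sqrt (1 - b ^ 2) with hv_def
  have hu2 : u ^ 2 = 1 - a ^ 2 := Real.sq_sqrt (by nlinarith)
  have hv2 : v ^ 2 = 1 - b ^ 2 := Real.sq_sqrt (by nlinarith)
  have hu0 : 0 < u := Real.sqrt_pos.2 (by nlinarith)
  have hv0 : 0 < v := Real.sqrt_pos.2 (by nlinarith)
  set m : ℝ := (a + b) / 2 with hm_def
  have hm0 : 0 ≤ m := by positivity
  have hm1 : m < 1 := by rw [hm_def]; linarith
  have hrm : r / 2 ≤ m := by rw [hm_def]; linarith
  have hr2 : r / 2 ≤ 1 := by linarith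
  have h1m : 0 < 1 - m ^ 2 := by nlinarith
  have huv : u * v ≤ 1 - m ^ 2 := by
    have hsq : (u * v) ^ 2 ≤ (1 - m ^ 2) ^ 2 := by
      rw [mul_pow, hu2, hv2, hm_def]
      nlinarith [sq_nonneg (a - b), sq_nonneg (a*b), sq_nonneg (a + b), mul_nonneg ha0 hb0]
    have h := Real.sqrt_le_sqrt hsq
    rwa [Real.sqrt_sq (mul_pos hu0 hv0).le, Real.sqrt_sq h1m.le] at h
  have hs0 : 0 ≤ Real.sinh (r / 2) := Real.sinh_nonneg_iff.2 (by linarith)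
  have hsinh : Real.sinh (r / 2) ≤ r / 2 + (r / 2) ^ 3 / 3 := aux_sinh_le (by linarith) hr2
  have hq : (r / 2) ^ 2 ≤ m ^ 2 := by nlinarith
  have hsinh' : Real.sinh (r / 2) ≤ (r / 2) * (1 + m ^ 2 / 3) := by
    have h := mul_le_mul_of_nonneg_left hq (show (0:ℝ) ≤ r / 2 by linarith)
    nlinarith [h]
  have hcosh : Real.cosh r = 1 + 2 * Real.sinh (r / 2) ^ 2 := by
    have h2 : Real.cosh (2 * (r / 2)) = Real.cosh (r / 2) ^ 2 + Real.sinh (r / 2) ^ 2 :=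
      Real.cosh_two_mul _
    rw [show 2 * (r / 2) = r by ring, Real.cosh_sq'] at h2
    linarith
  have h2 : u * v ≤ (u ^ 2 + v ^ 2) / 2 := by nlinarith [sq_nonneg (u - v)]
  have h3 : 2 * (u * v) * Real.sinh (r / 2) ^ 2 ≤ r ^ 2 / 2 := by
    have hb1 : Real.sinh (r / 2) ^ 2 ≤ ((r / 2) * (1 + m ^ 2 / 3)) ^ 2 :=
      pow_le_pow_left₀ hs0 hsinh' 2
    have e1 : u * v * Real.sinh (r / 2) ^ 2 ≤ (1 - m ^ 2) * Real.sinh (r / 2) ^ 2 :=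
      mul_le_mul_of_nonneg_right huv (sq_nonneg _)
    have e2 : (1 - m ^ 2) * Real.sinh (r / 2) ^ 2 ≤
        (1 - m ^ 2) * ((r / 2) * (1 + m ^ 2 / 3)) ^ 2 :=
      mul_le_mul_of_nonneg_left hb1 h1m.le
    have hq2 : (1 - m ^ 2) * (1 + m ^ 2 / 3) ^ 2 ≤ 1 := by
      nlinarith [sq_nonneg m, sq_nonneg (m*m), sq_nonneg (m*m*m)]
    have hb3 : 2 * ((1 - m ^ 2) * ((r / 2) * (1 + m ^ 2 / 3)) ^ 2) ≤ r ^ 2 / 2 := by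
      have h := mul_le_mul_of_nonneg_left hq2 (show (0:ℝ) ≤ r ^ 2 / 2 by positivity)
      nlinarith [h]
    linarith
  have h4 : 1 - c = ((1 - a ^ 2) + (1 - b ^ 2)) / 2 + r ^ 2 / 2 := by linarith
  rw [hcosh, h4, ← hu2, ← hv2]
  nlinarith [h2, h3, hs0]

private lemma aux_final {t r : ℝ} (hr0 : 0 ≤ r) (ht : Real.cosh r ≤ t) : r ≤ arccosh t := by
  have ht1 : (1 : ℝ) ≤ t := le_trans (Real.one_le_cosh r) ht
  have hsinhr : Real.sqrt (Real.cosh r ^ 2 - 1) = Real.sinh r := by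
    rw [← Real.sinh_sq, Real.sqrt_sq (Real.sinh_nonneg_iff.2 hr0)]
  have hsq : Real.sqrt (Real.cosh r ^ 2 - 1) ≤ Real.sqrt (t ^ 2 - 1) := by
    apply Real.sqrt_le_sqrt
    have : Real.cosh r ^ 2 ≤ t ^ 2 := by nlinarith [Real.one_le_cosh r]
    linarith
  have hexp : Real.exp r ≤ t + Real.sqrt (t ^ 2 - 1) := by
    rw [← Real.cosh_add_sinh, ← hsinhr]
    linarith
  have hpos : 0 < t + Real.sqrt (t ^ 2 - 1) := by
    have := Real.sqrt_nonneg (t ^ 2 - 1)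
    linarith
  rw [arccosh, Real.le_log_iff_exp_le hpos]
  exact hexp

theorem klein_dist_ge_euclidean {d : ℕ} (x y : EuclideanSpace ℝ (Fin d))
    (hx : x ∈ ball (0 : EuclideanSpace ℝ (Fin d)) 1)
    (hy : y ∈ ball (0 : EuclideanSpace ℝ (Fin d)) 1) :
    ‖x - y‖ ≤ kleinDist x y := by
  rw [mem_ball_zero_iff] at hx hy
  have key := aux_key ‖x‖ ‖y‖ ‖x - y‖ ⟪x, y⟫ (norm_nonneg x) hx (norm_nonneg y) hy
    (norm_nonneg _) (norm_sub_le x y) (norm_sub_sq_real x y)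
  have hu0 : 0 < Real.sqrt (1 - ‖x‖ ^ 2) := Real.sqrt_pos.2 (by nlinarith [norm_nonneg x])
  have hv0 : 0 < Real.sqrt (1 - ‖y‖ ^ 2) := Real.sqrt_pos.2 (by nlinarith [norm_nonneg y])
  have ht : Real.cosh ‖x - y‖ ≤
      (1 - ⟪x, y⟫) / (Real.sqrt (1 - ‖x‖ ^ 2) * Real.sqrt (1 - ‖y‖ ^ 2)) :=
    (le_div_iff₀ (mul_pos hu0 hv0)).2 (by linarith [key])
  exact aux_final (norm_nonneg _) ht
end

section
/- Bounded distortion of the Klein model on small balls: for every ρ ∈ (0,1) and all x, y in the closed Euclidean ball of radius ρ centered at the origin in ℝ^d, d_K(x,y) ≤ ‖x − y‖ / (1 − ρ²). -/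
open scoped RealInnerProductSpace
open Metric MeasureTheory

lemma arccosh_le_sqrt {t : ℝ} (ht : 1 ≤ t) : arccosh t ≤ Real.sqrt (t ^ 2 - 1) := by
  set u := Real.sqrt (t ^ 2 - 1) with hu_def
  have hu : 0 ≤ u := Real.sqrt_nonneg _
  have hu2 : u ^ 2 = t ^ 2 - 1 := Real.sq_sqrt (by nlinarith)
  have hexp : 1 + u + u ^ 2 / 2 ≤ Real.exp u := by
    have h := Real.sum_le_exp_of_nonneg hu 3
    have hs : ∑ i ∈ Finset.range 3, u ^ i / (Nat.factorial i) = 1 + u + u ^ 2 / 2 := by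
      rw [Finset.sum_range_succ, Finset.sum_range_succ, Finset.sum_range_one]
      norm_num [Nat.factorial]
    linarith [hs ▸ h]
  have ht' : t ≤ 1 + u ^ 2 / 2 := by nlinarith [sq_nonneg (t - 1)]
  have h1 : t + u ≤ Real.exp u := by linarith
  have h2 : Real.log (t + u) ≤ u := by
    calc Real.log (t + u) ≤ Real.log (Real.exp u) :=
          Real.log_le_log (by linarith) h1
      _ = u := Real.log_exp u
  exact h2

set_option maxHeartbeats 800000 in
theorem klein_dist_bounded_distortion {d : ℕ} (ρ : ℝ) (hρ0 : 0 < ρ) (hρ1 : ρ < 1)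
    (x y : EuclideanSpace ℝ (Fin d))
    (hx : x ∈ closedBall (0 : EuclideanSpace ℝ (Fin d)) ρ)
    (hy : y ∈ closedBall (0 : EuclideanSpace ℝ (Fin d)) ρ) :
    kleinDist x y ≤ ‖x - y‖ / (1 - ρ ^ 2) := by
  rw [kleinDist]
  have hx' : ‖x‖ ≤ ρ := mem_closedBall_zero_iff.mp hx
  have hy' : ‖y‖ ≤ ρ := mem_closedBall_zero_iff.mp hy
  have hρ2 : ρ ^ 2 < 1 := by nlinarith
  have hrpos : 0 < 1 - ρ ^ 2 := by linarith
  have hax : ‖x‖ ^ 2 ≤ ρ ^ 2 := by nlinarith [norm_nonneg x]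
  have hay : ‖y‖ ^ 2 ≤ ρ ^ 2 := by nlinarith [norm_nonneg y]
  have h1x : 0 < 1 - ‖x‖ ^ 2 := by linarith
  have h1y : 0 < 1 - ‖y‖ ^ 2 := by linarith
  set s : ℝ := ⟪x, y⟫ with hs_def
  set Dx := Real.sqrt (1 - ‖x‖ ^ 2) with hDx_def
  set Dy := Real.sqrt (1 - ‖y‖ ^ 2) with hDy_def
  have hDx : 0 < Dx := Real.sqrt_pos.mpr h1x
  have hDy : 0 < Dy := Real.sqrt_pos.mpr h1y
  have hDx2 : Dx ^ 2 = 1 - ‖x‖ ^ 2 := Real.sq_sqrt h1x.le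
  have hDy2 : Dy ^ 2 = 1 - ‖y‖ ^ 2 := Real.sq_sqrt h1y.le
  set E := Dx * Dy with hE_def
  have hE : 0 < E := mul_pos hDx hDy
  have hE2 : E ^ 2 = (1 - ‖x‖ ^ 2) * (1 - ‖y‖ ^ 2) := by
    rw [hE_def, mul_pow, hDx2, hDy2]
  have hsle : |s| ≤ ‖x‖ * ‖y‖ := abs_real_inner_le_norm x y
  have hsle' := abs_le.mp hsle
  have hab : ‖x‖ * ‖y‖ ≤ ρ ^ 2 := by nlinarith [norm_nonneg x, norm_nonneg y]
  have hs2 : s ^ 2 ≤ (‖x‖ * ‖y‖) ^ 2 := by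
    rw [← sq_abs]; exact pow_le_pow_left₀ (abs_nonneg _) hsle 2
  have hc : 0 ≤ 1 - ‖x‖ * ‖y‖ := by linarith
  have hEab2 : E ^ 2 ≤ (1 - ‖x‖ * ‖y‖) ^ 2 := by
    rw [hE2]; nlinarith [sq_nonneg (‖x‖ - ‖y‖)]
  have hEab : E ≤ 1 - ‖x‖ * ‖y‖ :=
    (pow_le_pow_iff_left₀ hE.le hc two_ne_zero).mp hEab2
  have hEle : E ≤ 1 - s := by linarith [hsle'.2]
  have hEsq : (1 - ρ ^ 2) ^ 2 ≤ E ^ 2 := by rw [hE2]; nlinarith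
  have hErρ : 1 - ρ ^ 2 ≤ E :=
    (pow_le_pow_iff_left₀ hrpos.le hE.le two_ne_zero).mp hEsq
  set t := (1 - s) / E with ht_def
  have ht1 : 1 ≤ t := (le_div_iff₀ hE).mpr (by linarith)
  have hnorm : ‖x - y‖ ^ 2 = ‖x‖ ^ 2 - 2 * s + ‖y‖ ^ 2 := by
    rw [norm_sub_sq_real]; try ring
  have key : (1 - s) ^ 2 - E ^ 2 ≤ ‖x - y‖ ^ 2 := by
    rw [hE2]; nlinarith
  have step : t ^ 2 - 1 ≤ (‖x - y‖ / (1 - ρ ^ 2)) ^ 2 := by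
    have hE2pos : 0 < E ^ 2 := by positivity
    calc t ^ 2 - 1 = ((1 - s) ^ 2 - E ^ 2) / E ^ 2 := by
          rw [ht_def, div_pow]; try field_simp
      _ ≤ ‖x - y‖ ^ 2 / E ^ 2 := by gcongr
      _ ≤ ‖x - y‖ ^ 2 / (1 - ρ ^ 2) ^ 2 :=
          div_le_div_of_nonneg_left (sq_nonneg _) (by positivity) hEsq
      _ = (‖x - y‖ / (1 - ρ ^ 2)) ^ 2 := by rw [div_pow]
  have final : Real.sqrt (t ^ 2 - 1) ≤ ‖x - y‖ / (1 - ρ ^ 2) := by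
    calc Real.sqrt (t ^ 2 - 1) ≤ Real.sqrt ((‖x - y‖ / (1 - ρ ^ 2)) ^ 2) :=
          Real.sqrt_le_sqrt step
      _ = ‖x - y‖ / (1 - ρ ^ 2) := Real.sqrt_sq (by positivity)
  calc arccosh t ≤ Real.sqrt (t ^ 2 - 1) := arccosh_le_sqrt ht1
    _ ≤ ‖x - y‖ / (1 - ρ ^ 2) := final
end

section
/- Lipschitz constants transfer through the Klein geodesic map with bounded loss: if ρ ∈ (0,1), and f is a real-valued function on the closed Euclidean ball B̄(0,ρ) ⊂ ℝ^d that is M-Lipschitz with respect to the Beltrami–Klein distance (i.e., |f(x) − f(y)| ≤ M·d_K(x,y) for all x,y ∈ B̄(0,ρ)), then f is (M/(1−ρ²))-Lipschitz with respect to the Euclidean distance on B̄(0,ρ). -/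
open scoped RealInnerProductSpace
open Metric MeasureTheory

lemma kleinDist_le {d : ℕ} {ρ : ℝ} (hρ1 : ρ < 1) {x y : EuclideanSpace ℝ (Fin d)}
    (hx : ‖x‖ ≤ ρ) (hy : ‖y‖ ≤ ρ) : kleinDist x y ≤ ‖x - y‖ / (1 - ρ ^ 2) := by
  have hρ0 : 0 ≤ ρ := le_trans (norm_nonneg x) hx
  have hρ2 : 0 < 1 - ρ ^ 2 := by nlinarith
  have hx2 : ‖x‖ ^ 2 ≤ ρ ^ 2 := by nlinarith [norm_nonneg x]
  have hy2 : ‖y‖ ^ 2 ≤ ρ ^ 2 := by nlinarith [norm_nonneg y]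
  set a : ℝ := 1 - ‖x‖ ^ 2 with ha_def
  set b : ℝ := 1 - ‖y‖ ^ 2 with hb_def
  have ha : 1 - ρ ^ 2 ≤ a := by simp [ha_def]; linarith
  have hb : 1 - ρ ^ 2 ≤ b := by simp [hb_def]; linarith
  have ha0 : 0 < a := lt_of_lt_of_le hρ2 ha
  have hb0 : 0 < b := lt_of_lt_of_le hρ2 hb
  have habs : |⟪x, y⟫| ≤ ‖x‖ * ‖y‖ := abs_real_inner_le_norm x y
  have hnn : ‖x‖ * ‖y‖ ≤ ρ ^ 2 := by nlinarith [norm_nonneg x, norm_nonneg y]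
  have hip : ⟪x, y⟫ ≤ ρ ^ 2 := le_trans (le_trans (le_abs_self _) habs) hnn
  have hip' : 1 - ρ ^ 2 ≤ 1 - ⟪x, y⟫ := by linarith
  have hipos : 0 < 1 - ⟪x, y⟫ := lt_of_lt_of_le hρ2 hip'
  -- norm of difference
  have hdiff : ‖x - y‖ ^ 2 = ‖x‖ ^ 2 - 2 * ⟪x, y⟫ + ‖y‖ ^ 2 := by
    rw [@norm_sub_sq_real]
  -- ab ≤ (1 - ⟪x,y⟫)^2
  have hab_le : a * b ≤ (1 - ⟪x, y⟫) ^ 2 := by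
    have h1 : (1 - ‖x‖ * ‖y‖) ^ 2 - a * b = (‖x‖ - ‖y‖) ^ 2 := by
      simp only [ha_def, hb_def]; ring
    have h2 : 0 ≤ 1 - ‖x‖ * ‖y‖ := by nlinarith
    have h3 : 1 - ‖x‖ * ‖y‖ ≤ 1 - ⟪x, y⟫ := by
      have := le_trans (le_abs_self ⟪x, y⟫) habs
      linarith
    nlinarith [sq_nonneg (‖x‖ - ‖y‖)]
  have hsab : Real.sqrt a * Real.sqrt b = Real.sqrt (a * b) :=
    (Real.sqrt_mul ha0.le b).symm
  have hsab0 : 0 < Real.sqrt (a * b) := Real.sqrt_pos.mpr (mul_pos ha0 hb0)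
  have hsab_le : Real.sqrt (a * b) ≤ 1 - ⟪x, y⟫ := by
    calc Real.sqrt (a * b) ≤ Real.sqrt ((1 - ⟪x, y⟫) ^ 2) := Real.sqrt_le_sqrt hab_le
    _ = 1 - ⟪x, y⟫ := Real.sqrt_sq hipos.le
  set A : ℝ := (1 - ⟪x, y⟫) / (Real.sqrt a * Real.sqrt b) with hA_def
  have hA1 : 1 ≤ A := by
    rw [hA_def, hsab, le_div_iff₀ hsab0]
    linarith
  have hA2 : A ^ 2 = (1 - ⟪x, y⟫) ^ 2 / (a * b) := by
    rw [hA_def, div_pow, hsab, Real.sq_sqrt (mul_pos ha0 hb0).le]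
  -- Cauchy-Schwarz squared
  have hcs : ⟪x, y⟫ ^ 2 ≤ ‖x‖ ^ 2 * ‖y‖ ^ 2 := by
    nlinarith [abs_nonneg ⟪x, y⟫, sq_abs ⟪x, y⟫, norm_nonneg x, norm_nonneg y]
  -- key numerator bound
  have hnum : (1 - ⟪x, y⟫) ^ 2 - a * b ≤ ‖x - y‖ ^ 2 := by
    have : (1 - ⟪x, y⟫) ^ 2 - a * b = ‖x - y‖ ^ 2 + (⟪x, y⟫ ^ 2 - ‖x‖ ^ 2 * ‖y‖ ^ 2) := by
      rw [hdiff]; simp only [ha_def, hb_def]; ring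
    linarith
  have hab0 : 0 < a * b := mul_pos ha0 hb0
  have h4 : (1 - ρ ^ 2) ^ 2 ≤ a * b := by
    rw [sq]; exact mul_le_mul ha hb hρ2.le (by linarith)
  have hA2c : A ^ 2 - 1 = ((1 - ⟪x, y⟫) ^ 2 - a * b) / (a * b) := by
    rw [hA2]; field_simp
  have hA2b : A ^ 2 - 1 ≤ (‖x - y‖ / (1 - ρ ^ 2)) ^ 2 := by
    rw [hA2c, div_pow]
    exact div_le_div₀ (sq_nonneg _) hnum (pow_pos hρ2 2) h4
  calc kleinDist x y = arccosh A := rfl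
  _ ≤ Real.sqrt (A ^ 2 - 1) := arccosh_le_sqrt hA1
  _ ≤ Real.sqrt ((‖x - y‖ / (1 - ρ ^ 2)) ^ 2) := Real.sqrt_le_sqrt hA2b
  _ = ‖x - y‖ / (1 - ρ ^ 2) := Real.sqrt_sq (by positivity)

theorem klein_lipschitz_transfer {d : ℕ} (ρ M : ℝ) (hρ0 : 0 < ρ) (hρ1 : ρ < 1)
    (f : EuclideanSpace ℝ (Fin d) → ℝ)
    (hf : ∀ x ∈ closedBall (0 : EuclideanSpace ℝ (Fin d)) ρ,
      ∀ y ∈ closedBall (0 : EuclideanSpace ℝ (Fin d)) ρ,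
        |f x - f y| ≤ M * kleinDist x y) :
    ∀ x ∈ closedBall (0 : EuclideanSpace ℝ (Fin d)) ρ,
      ∀ y ∈ closedBall (0 : EuclideanSpace ℝ (Fin d)) ρ,
        |f x - f y| ≤ (M / (1 - ρ ^ 2)) * ‖x - y‖ := by
  intro x hx y hy
  rw [mem_closedBall, dist_zero_right] at hx hy
  have hρ2 : 0 < 1 - ρ ^ 2 := by nlinarith
  rcases le_or_gt 0 M with hM | hM
  · have h1 : |f x - f y| ≤ M * kleinDist x y :=
      hf x (mem_closedBall_zero_iff.mpr hx) y (mem_closedBall_zero_iff.mpr hy)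
    have h2 : M * kleinDist x y ≤ M * (‖x - y‖ / (1 - ρ ^ 2)) :=
      mul_le_mul_of_nonneg_left (kleinDist_le hρ1 hx hy) hM
    have h3 : M * (‖x - y‖ / (1 - ρ ^ 2)) = (M / (1 - ρ ^ 2)) * ‖x - y‖ := by ring
    linarith
  · -- M < 0 leads to a contradiction if d ≥ 1; if d = 0 everything is trivial
    rcases Nat.eq_zero_or_pos d with hd | hd
    · subst hd
      have : x = y := Subsingleton.elim x y
      subst this
      simp
    · exfalso
      set e : EuclideanSpace ℝ (Fin d) := EuclideanSpace.single ⟨0, hd⟩ ρ with he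
      have hne : ‖e‖ = ρ := by
        rw [he, EuclideanSpace.norm_single, Real.norm_eq_abs, abs_of_pos hρ0]
      have h0mem : (0 : EuclideanSpace ℝ (Fin d)) ∈ closedBall (0 : EuclideanSpace ℝ (Fin d)) ρ := by
        simp [hρ0.le]
      have hemem : e ∈ closedBall (0 : EuclideanSpace ℝ (Fin d)) ρ := by
        simp [mem_closedBall, dist_zero_right, hne]
      have hbound := hf 0 h0mem e hemem
      have hk : kleinDist 0 e = arccosh (1 / Real.sqrt (1 - ρ ^ 2)) := by
        simp [kleinDist, inner_zero_left, norm_zero, hne]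
      have hs1 : Real.sqrt (1 - ρ ^ 2) < 1 := by
        have h := Real.sqrt_lt_sqrt hρ2.le (show 1 - ρ ^ 2 < 1 by nlinarith)
        rwa [Real.sqrt_one] at h
      have hs0 : 0 < Real.sqrt (1 - ρ ^ 2) := Real.sqrt_pos.mpr hρ2
      have hAgt : 1 < 1 / Real.sqrt (1 - ρ ^ 2) := by
        rw [lt_div_iff₀ hs0]; linarith
      have hkpos : 0 < kleinDist 0 e := by
        rw [hk]
        unfold arccosh
        apply Real.log_pos
        have : 0 ≤ Real.sqrt ((1 / Real.sqrt (1 - ρ ^ 2)) ^ 2 - 1) := Real.sqrt_nonneg _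
        linarith
      nlinarith [abs_nonneg (f 0 - f e)]
end

section
/- Volume of the ellipsoid-method update ellipsoid: let d ≥ 2, let g ∈ ℝ^d be a unit vector, and define E' = {x ∈ ℝ^d : ((d+1)²/d²)·(⟨g,x⟩ + 1/(d+1))² + ((d²−1)/d²)·(‖x‖² − ⟨g,x⟩²) ≤ 1}. Then the Lebesgue volume of E' equals (d/(d+1))·(d²/(d²−1))^((d−1)/2) times the Lebesgue volume of the closed unit ball of ℝ^d. -/
open scoped RealInnerProductSpace
open Metric MeasureTheory

set_option maxHeartbeats 2000000 in
theorem update_ellipsoid_volume {d : ℕ} (hd : 2 ≤ d)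
    (g : EuclideanSpace ℝ (Fin d)) (hg : ‖g‖ = 1) :
    volume {x : EuclideanSpace ℝ (Fin d) |
        ((d + 1 : ℝ) ^ 2 / (d : ℝ) ^ 2) * (⟪g, x⟫ + 1 / (d + 1 : ℝ)) ^ 2 +
          (((d : ℝ) ^ 2 - 1) / (d : ℝ) ^ 2) * (‖x‖ ^ 2 - ⟪g, x⟫ ^ 2) ≤ 1}
      = ENNReal.ofReal
          (((d : ℝ) / (d + 1)) * ((d : ℝ) ^ 2 / ((d : ℝ) ^ 2 - 1)) ^ (((d : ℝ) - 1) / 2)) *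
        volume (closedBall (0 : EuclideanSpace ℝ (Fin d)) 1) := by
  haveI : NeZero d := ⟨by omega⟩
  have hds : (2 : ℝ) ≤ (d : ℝ) := by exact_mod_cast hd
  have hd0 : (0 : ℝ) < (d : ℝ) := by linarith
  have hd1 : (0 : ℝ) < (d : ℝ) + 1 := by linarith
  have hd2 : (0 : ℝ) < (d : ℝ) ^ 2 - 1 := by nlinarith
  set b : ℝ := Real.sqrt ((d : ℝ) ^ 2 / ((d : ℝ) ^ 2 - 1)) with hb_def
  have hb : 0 < b := Real.sqrt_pos.2 (by positivity)
  have hb2 : b ^ 2 = (d : ℝ) ^ 2 / ((d : ℝ) ^ 2 - 1) := Real.sq_sqrt (by positivity)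
  have hgg : ⟪g, g⟫ = (1 : ℝ) := by
    rw [real_inner_self_eq_norm_sq, hg]; norm_num
  -- the linear map
  set L : EuclideanSpace ℝ (Fin d) →ₗ[ℝ] EuclideanSpace ℝ (Fin d) :=
    b • (LinearMap.id : EuclideanSpace ℝ (Fin d) →ₗ[ℝ] EuclideanSpace ℝ (Fin d)) +
      LinearMap.smulRight (((d : ℝ) / (d + 1) - b) • (innerSL ℝ g).toLinearMap) g with hL_def
  have hLapp : ∀ u : EuclideanSpace ℝ (Fin d),
      L u = b • u + (((d : ℝ) / (d + 1) - b) * ⟪g, u⟫) • g := by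
    intro u
    simp [hL_def, LinearMap.smulRight_apply, smul_smul]
  -- key scalar computation
  have key : ∀ u : EuclideanSpace ℝ (Fin d),
      ((d + 1 : ℝ) ^ 2 / (d : ℝ) ^ 2) *
          (⟪g, L u + (-(1 / ((d : ℝ) + 1))) • g⟫ + 1 / (d + 1 : ℝ)) ^ 2 +
        (((d : ℝ) ^ 2 - 1) / (d : ℝ) ^ 2) *
          (‖L u + (-(1 / ((d : ℝ) + 1))) • g‖ ^ 2
            - ⟪g, L u + (-(1 / ((d : ℝ) + 1))) • g⟫ ^ 2) = ‖u‖ ^ 2 := by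
    intro u
    set s : ℝ := ⟪g, u⟫ with hs_def
    set k : ℝ := ((d : ℝ) / (d + 1) - b) * s - 1 / ((d : ℝ) + 1) with hk_def
    have hx1 : L u + (-(1 / ((d : ℝ) + 1))) • g = b • u + k • g := by
      rw [hLapp]; rw [hk_def]; module
    have hin : ⟪g, L u + (-(1 / ((d : ℝ) + 1))) • g⟫ = b * s + k := by
      rw [hx1, inner_add_right, real_inner_smul_right, real_inner_smul_right, hgg,
        mul_one, ← hs_def]
    have hno : ‖L u + (-(1 / ((d : ℝ) + 1))) • g‖ ^ 2
        = b ^ 2 * ‖u‖ ^ 2 + 2 * (b * k * s) + k ^ 2 := by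
      have hug : ⟪u, g⟫ = s := by rw [real_inner_comm, ← hs_def]
      rw [hx1, norm_add_sq_real, norm_smul, norm_smul, real_inner_smul_left,
        real_inner_smul_right, hug, hg, Real.norm_eq_abs,
        Real.norm_eq_abs, mul_pow, mul_pow, sq_abs, sq_abs]
      ring
    rw [hno, hin]
    have f1 : ((d : ℝ) + 1) ^ 2 / (d : ℝ) ^ 2 * (((d : ℝ) / (d + 1)) * s) ^ 2 = s ^ 2 := by
      field_simp
    have f2 : (((d : ℝ) ^ 2 - 1) / (d : ℝ) ^ 2) * (b ^ 2 * (‖u‖ ^ 2 - s ^ 2))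
        = ‖u‖ ^ 2 - s ^ 2 := by
      rw [hb2]; field_simp
    linear_combination f1 + f2 + (0 : ℝ) * hk_def
  -- set equality
  have hset : {x : EuclideanSpace ℝ (Fin d) |
        ((d + 1 : ℝ) ^ 2 / (d : ℝ) ^ 2) * (⟪g, x⟫ + 1 / (d + 1 : ℝ)) ^ 2 +
          (((d : ℝ) ^ 2 - 1) / (d : ℝ) ^ 2) * (‖x‖ ^ 2 - ⟪g, x⟫ ^ 2) ≤ 1}
      = (fun u => L u + (-(1 / ((d : ℝ) + 1))) • g) '' closedBall 0 1 := by
    ext x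
    simp only [Set.mem_setOf_eq, Set.mem_image, Metric.mem_closedBall, dist_zero_right]
    constructor
    · intro hx
      have hgy : ⟪g, x + (1 / ((d : ℝ) + 1)) • g⟫ = ⟪g, x⟫ + 1 / ((d : ℝ) + 1) := by
        rw [inner_add_right, real_inner_smul_right, hgg, mul_one]
      set u : EuclideanSpace ℝ (Fin d) :=
        b⁻¹ • (x + (1 / ((d : ℝ) + 1)) • g) +
          ((((d : ℝ) + 1) / d - b⁻¹) * ⟪g, x + (1 / ((d : ℝ) + 1)) • g⟫) • g with hu_def
      have hgu : ⟪g, u⟫ = (((d : ℝ) + 1) / d) * (⟪g, x⟫ + 1 / ((d : ℝ) + 1)) := by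
        rw [hu_def, inner_add_right, real_inner_smul_right, real_inner_smul_right,
          hgg, hgy]
        ring
      have hLu : L u + (-(1 / ((d : ℝ) + 1))) • g = x := by
        rw [hLapp, hgu, hu_def, hgy]
        match_scalars
        · field_simp
        · field_simp
          ring
      refine ⟨u, ?_, hLu⟩
      have hq := key u
      rw [hLu] at hq
      nlinarith [norm_nonneg u, hq, hx]
    · rintro ⟨u, hu, rfl⟩
      have hq := key u
      rw [hq]
      nlinarith [norm_nonneg u]
  -- orthonormal basis with first vector g
  have hcard : Module.finrank ℝ (EuclideanSpace ℝ (Fin d)) = Fintype.card (Fin d) := by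
    simp
  have horth : Orthonormal ℝ (({0} : Set (Fin d)).restrict (fun _ : Fin d => g)) := by
    constructor
    · intro i; exact hg
    · intro i j hij
      exact absurd (Subsingleton.elim i j) hij
  obtain ⟨B, hB⟩ := horth.exists_orthonormalBasis_extension_of_card_eq hcard
  have hB0 : B 0 = g := hB 0 rfl
  -- matrix of L
  have hLB : ∀ j : Fin d, L (B j) = (if j = 0 then (d : ℝ) / (d + 1) else b) • B j := by
    intro j
    rw [hLapp]
    rcases eq_or_ne j 0 with rfl | hj
    · rw [hB0, if_pos rfl, hgg]
      match_scalars; ring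
    · have h0 : ⟪g, B j⟫ = 0 := by
        rw [← hB0]; exact B.orthonormal.2 (Ne.symm hj)
      rw [h0, if_neg hj]
      simp
  have hmat : LinearMap.toMatrix B.toBasis B.toBasis L
      = Matrix.diagonal (fun i : Fin d => if i = 0 then (d : ℝ) / (d + 1) else b) := by
    ext i j
    rw [LinearMap.toMatrix_apply, OrthonormalBasis.coe_toBasis, hLB j, _root_.map_smul,
      ← OrthonormalBasis.coe_toBasis, Module.Basis.repr_self]
    rcases eq_or_ne i j with rfl | h
    · rw [Matrix.diagonal_apply_eq]
      split <;> simp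
    · rw [Matrix.diagonal_apply_ne _ h]
      split <;> simp [Finsupp.single_eq_of_ne' (Ne.symm h)]
  have hdet : LinearMap.det L = ((d : ℝ) / (d + 1)) * b ^ (d - 1) := by
    rw [← LinearMap.det_toMatrix B.toBasis, hmat, Matrix.det_diagonal]
    have h0 : (Finset.univ : Finset (Fin d)) = insert 0 (Finset.univ.erase 0) :=
      (Finset.insert_erase (Finset.mem_univ 0)).symm
    rw [h0, Finset.prod_insert (Finset.notMem_erase _ _), if_pos rfl]
    congr 1
    rw [Finset.prod_congr rfl (fun x hx => if_neg (Finset.ne_of_mem_erase hx)),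
      Finset.prod_const, Finset.card_erase_of_mem (Finset.mem_univ _),
      Finset.card_univ, Fintype.card_fin]
  -- final volume computation
  rw [hset]
  have himgeq : (fun u => L u + (-(1 / ((d : ℝ) + 1))) • g) '' closedBall 0 1
      = (fun y => y + (-(1 / ((d : ℝ) + 1))) • g) '' (⇑L '' closedBall 0 1) := by
    rw [Set.image_image]
  rw [himgeq, Set.image_add_right, measure_preimage_add_right,
    Measure.addHaar_image_linearMap, hdet]
  congr 2
  rw [abs_of_pos (by positivity)]
  congr 1
  rw [hb_def, Real.sqrt_eq_rpow, ← Real.rpow_natCast (((d : ℝ) ^ 2 / ((d : ℝ) ^ 2 - 1)) ^ ((1:ℝ)/2)) (d - 1),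
    ← Real.rpow_mul (by positivity)]
  congr 1
  rw [Nat.cast_sub (by omega)]
  push_cast
  ring
end

section
/- General ellipsoid-method step: let d ≥ 2, let E ⊂ ℝ^d be an ellipsoid, i.e., E = c + T(B̄(0,1)) for some c ∈ ℝ^d and invertible linear map T : ℝ^d → ℝ^d, and let H = {x ∈ ℝ^d : ⟨g, x − c⟩ ≤ 0} be a halfspace whose boundary passes through the center c, where g ≠ 0. Then there exists an ellipsoid E' (an image c' + T'(B̄(0,1)) with T' invertible linear) such that E ∩ H ⊆ E' and the Lebesgue volume of E' is at most exp(−1/(2(d+1))) times the Lebesgue volume of E. -/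
open scoped RealInnerProductSpace
open Metric MeasureTheory Pointwise

lemma ellipsoid_ratio_le {d : ℕ} (hd : 2 ≤ d) :
    ((d:ℝ)/((d:ℝ)+1)) * ((d:ℝ)/Real.sqrt ((d:ℝ)^2-1))^(d-1)
      ≤ Real.exp (-1 / (2*((d:ℝ)+1))) := by
  set D : ℝ := (d:ℝ) with hD
  have hD2 : (2:ℝ) ≤ D := by rw [hD]; exact_mod_cast hd
  have hpos : (0:ℝ) < D^2 - 1 := by nlinarith
  have hs : Real.sqrt (D^2-1) > 0 := Real.sqrt_pos.mpr hpos
  set α : ℝ := D / Real.sqrt (D^2-1) with hα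
  have hα0 : 0 < α := div_pos (by linarith) hs
  have hα2 : α^2 = 1 + (D^2-1)⁻¹ := by
    rw [hα, div_pow, Real.sq_sqrt hpos.le]; field_simp; ring
  have h2 : α^2 ≤ Real.exp ((D^2-1)⁻¹) := by
    have := Real.add_one_le_exp ((D^2-1)⁻¹)
    rw [hα2]; linarith
  set n := d - 1 with hn
  have hncast : (n:ℝ) = D - 1 := by
    rw [hn, hD]; push_cast [Nat.cast_sub (by omega : 1 ≤ d)]; ring
  have key : (n : ℝ) * (D^2-1)⁻¹ = (D+1)⁻¹ := by
    rw [hncast]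
    have : D^2 - 1 = (D-1)*(D+1) := by ring
    rw [this, mul_inv, ← mul_assoc, mul_inv_cancel₀ (by linarith : D - 1 ≠ 0), one_mul]
  have h3 : (α^n)^2 ≤ Real.exp ((D+1)⁻¹) := by
    calc (α^n)^2 = (α^2)^n := by ring
    _ ≤ (Real.exp ((D^2-1)⁻¹))^n := pow_le_pow_left₀ (by positivity) h2 n
    _ = Real.exp ((n:ℝ) * (D^2-1)⁻¹) := by rw [← Real.exp_nat_mul]
    _ = Real.exp ((D+1)⁻¹) := by rw [key]
  have h4 : α^n ≤ Real.exp ((D+1)⁻¹ / 2) := by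
    rw [Real.exp_half]
    calc α^n = Real.sqrt ((α^n)^2) := (Real.sqrt_sq (by positivity)).symm
    _ ≤ Real.sqrt (Real.exp ((D+1)⁻¹)) := Real.sqrt_le_sqrt h3
  have h5 : D/(D+1) ≤ Real.exp (-(D+1)⁻¹) := by
    have hd1 : (0:ℝ) < D + 1 := by linarith
    have : D/(D+1) = 1 + -(D+1)⁻¹ := by field_simp; ring
    rw [this]
    linarith [Real.add_one_le_exp (-(D+1)⁻¹)]
  calc D/(D+1) * α^n ≤ Real.exp (-(D+1)⁻¹) * Real.exp ((D+1)⁻¹/2) := by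
        apply mul_le_mul h5 h4 (by positivity) (Real.exp_pos _).le
  _ = Real.exp (-(D+1)⁻¹ + (D+1)⁻¹/2) := (Real.exp_add _ _).symm
  _ = Real.exp (-1 / (2*(D+1))) := by congr 1; field_simp; ring

set_option maxHeartbeats 1000000 in
theorem general_ellipsoid_step {d : ℕ} (hd : 2 ≤ d)
    (c : EuclideanSpace ℝ (Fin d))
    (T : EuclideanSpace ℝ (Fin d) →ₗ[ℝ] EuclideanSpace ℝ (Fin d))
    (hT : Function.Bijective T)
    (g : EuclideanSpace ℝ (Fin d)) (hg : g ≠ 0) :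
    ∃ (c' : EuclideanSpace ℝ (Fin d))
      (T' : EuclideanSpace ℝ (Fin d) →ₗ[ℝ] EuclideanSpace ℝ (Fin d)),
      Function.Bijective T' ∧
      ((fun v => c + T v) '' closedBall (0 : EuclideanSpace ℝ (Fin d)) 1) ∩
          {x : EuclideanSpace ℝ (Fin d) | ⟪g, x - c⟫ ≤ 0} ⊆
        (fun v => c' + T' v) '' closedBall (0 : EuclideanSpace ℝ (Fin d)) 1 ∧
      volume ((fun v => c' + T' v) '' closedBall (0 : EuclideanSpace ℝ (Fin d)) 1)
        ≤ ENNReal.ofReal (Real.exp (-1 / (2 * ((d : ℝ) + 1)))) *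
            volume ((fun v => c + T v) '' closedBall (0 : EuclideanSpace ℝ (Fin d)) 1) := by
  classical
  haveI : NeZero d := ⟨by omega⟩
  -- the normal direction in ball coordinates
  set u : EuclideanSpace ℝ (Fin d) := LinearMap.adjoint T g with hu
  have hu0 : u ≠ 0 := by
    intro h
    apply hg
    apply ext_inner_right ℝ
    intro y
    obtain ⟨v, rfl⟩ := hT.2 y
    rw [← LinearMap.adjoint_inner_left, ← hu, h, inner_zero_left, inner_zero_left]
  set a : EuclideanSpace ℝ (Fin d) := ‖u‖⁻¹ • u with ha
  have hna : ‖a‖ = 1 := by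
    rw [ha, norm_smul, norm_inv, norm_norm,
      inv_mul_cancel₀ (norm_ne_zero_iff.mpr hu0)]
  -- orthonormal basis with b 0 = a
  have hcard : Module.finrank ℝ (EuclideanSpace ℝ (Fin d)) = Fintype.card (Fin d) := by
    rw [Fintype.card_fin]; exact finrank_euclideanSpace_fin
  have horth : Orthonormal ℝ (({0} : Set (Fin d)).restrict (fun _ => a)) := by
    constructor
    · intro i; exact hna
    · intro i j hij
      exact absurd (Subsingleton.elim i j) hij
  obtain ⟨b, hb⟩ := horth.exists_orthonormalBasis_extension_of_card_eq hcard
  have hb0 : b 0 = a := hb 0 rfl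
  have hbo : ∀ i j : Fin d, ⟪b i, b j⟫ = if i = j then 1 else 0 := fun i j =>
    orthonormal_iff_ite.mp b.orthonormal i j
  -- scalars
  set D : ℝ := (d:ℝ) with hD
  have hD2 : (2:ℝ) ≤ D := by rw [hD]; exact_mod_cast hd
  have hD21 : (0:ℝ) < D^2 - 1 := by nlinarith
  set α : ℝ := D / Real.sqrt (D^2-1) with hα
  set β : ℝ := D / (D+1) with hβ
  have hα0 : 0 < α := div_pos (by linarith) (Real.sqrt_pos.mpr hD21)
  have hβ0 : 0 < β := div_pos (by linarith) (by linarith)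
  have hα2 : α^2 = D^2/(D^2-1) := by rw [hα, div_pow, Real.sq_sqrt hD21.le]
  set μl : Fin d → ℝ := fun i => if i = 0 then β else α with hμl
  have hμ0 : ∀ i, μl i ≠ 0 := by
    intro i; rw [hμl]; dsimp only; split <;> positivity
  -- the shrinking map
  set T₀ : EuclideanSpace ℝ (Fin d) →ₗ[ℝ] EuclideanSpace ℝ (Fin d) :=
    Matrix.toLin b.toBasis b.toBasis (Matrix.diagonal μl) with hT₀
  have hrepr : ∀ (M : Fin d → ℝ) (v : EuclideanSpace ℝ (Fin d)) (i : Fin d),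
      b.repr (Matrix.toLin b.toBasis b.toBasis (Matrix.diagonal M) v) i
        = M i * b.repr v i := by
    intro M v i
    rw [Matrix.toLin_apply, OrthonormalBasis.repr_apply_apply, inner_sum]
    simp only [real_inner_smul_right, Matrix.mulVec_diagonal,
      OrthonormalBasis.coe_toBasis, OrthonormalBasis.coe_toBasis_repr_apply, hbo,
      mul_ite, mul_one, mul_zero, Finset.sum_ite_eq, Finset.mem_univ, if_true]
  -- inverse and bijectivity
  set T₁ : EuclideanSpace ℝ (Fin d) →ₗ[ℝ] EuclideanSpace ℝ (Fin d) :=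
    Matrix.toLin b.toBasis b.toBasis (Matrix.diagonal fun i => (μl i)⁻¹) with hT₁
  have hbijT₀ : Function.Bijective T₀ := by
    rw [Function.bijective_iff_has_inverse]
    refine ⟨T₁, fun v => ?_, fun v => ?_⟩ <;>
    · apply b.repr.injective
      ext i
      rw [hT₀, hT₁]
      rw [hrepr, hrepr, ← mul_assoc]
      first
      | rw [inv_mul_cancel₀ (hμ0 i), one_mul]
      | rw [mul_inv_cancel₀ (hμ0 i), one_mul]
  -- determinant
  have hdet₀ : LinearMap.det T₀ = β * α^(d-1) := by
    rw [hT₀, LinearMap.det_toLin, Matrix.det_diagonal]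
    rw [← Finset.mul_prod_erase Finset.univ μl (Finset.mem_univ 0)]
    have h1 : μl 0 = β := by rw [hμl]; simp
    have h2 : ∀ i ∈ Finset.univ.erase (0 : Fin d), μl i = α := by
      intro i hi
      rw [hμl]
      simp [Finset.mem_erase.mp hi |>.1]
    rw [h1, Finset.prod_congr rfl h2, Finset.prod_const,
      Finset.card_erase_of_mem (Finset.mem_univ 0), Finset.card_univ, Fintype.card_fin]
  -- the new ellipsoid
  set c₀ : EuclideanSpace ℝ (Fin d) := (-(D+1)⁻¹) • a with hc₀
  refine ⟨c + T c₀, T ∘ₗ T₀, hT.comp hbijT₀, ?_, ?_⟩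
  · -- containment
    rintro x ⟨⟨v, hv, rfl⟩, hH⟩
    have hvn : ‖v‖ ≤ 1 := by simpa [dist_eq_norm] using hv
    have hinner : ⟪a, v⟫ ≤ 0 := by
      have h1 : ⟪g, T v⟫ ≤ 0 := by simpa using hH
      have h2 : ⟪u, v⟫ ≤ 0 := by rwa [hu, LinearMap.adjoint_inner_left]
      rw [ha, real_inner_smul_left]
      exact mul_nonpos_of_nonneg_of_nonpos (by positivity) h2
    set t : Fin d → ℝ := fun i => b.repr v i with hts
    have ht0 : t 0 ≤ 0 := by
      rw [hts]
      dsimp only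
      rw [OrthonormalBasis.repr_apply_apply, hb0]
      exact hinner
    set S : ℝ := ∑ i, t i ^ 2 with hS
    have hSv : S = ‖v‖^2 := by
      rw [hS, ← b.repr.norm_map v, EuclideanSpace.norm_eq, Real.sq_sqrt (by positivity)]
      exact Finset.sum_congr rfl fun i _ => by rw [Real.norm_eq_abs, sq_abs]
    have hS1 : S ≤ 1 := by rw [hSv]; nlinarith [norm_nonneg v]
    have hrest : ∑ i ∈ Finset.univ.erase (0 : Fin d), t i ^ 2 = S - t 0 ^ 2 := by
      rw [hS, ← Finset.sum_erase_add Finset.univ _ (Finset.mem_univ 0)]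
      ring
    have ht02 : t 0 ^ 2 ≤ S := by
      have : (0:ℝ) ≤ ∑ i ∈ Finset.univ.erase (0 : Fin d), t i ^ 2 := by positivity
      linarith [hrest]
    have ht0ge : -1 ≤ t 0 := by nlinarith
    -- the witness
    set f : EuclideanSpace ℝ (Fin d) :=
      (WithLp.equiv 2 (Fin d → ℝ)).symm
        (fun i => if i = 0 then (t 0 + (D+1)⁻¹)/β else t i / α) with hf
    have hfap : ∀ i, f i = if i = 0 then (t 0 + (D+1)⁻¹)/β else t i / α := by
      intro i; rw [hf]; rfl
    set w : EuclideanSpace ℝ (Fin d) := b.repr.symm f with hw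
    have hwrepr : ∀ i, b.repr w i = f i := by
      intro i; rw [hw, b.repr.apply_symm_apply]
    refine ⟨w, ?_, ?_⟩
    · -- norm of w
      rw [mem_closedBall, dist_eq_norm, sub_zero, hw, LinearIsometryEquiv.norm_map,
        EuclideanSpace.norm_eq]
      rw [Real.sqrt_le_one]
      have hfc : ∀ i, ‖f i‖^2 = f i ^ 2 := fun i => by rw [Real.norm_eq_abs, sq_abs]
      rw [Finset.sum_congr rfl fun i _ => hfc i]
      have hsplit : ∑ i, f i ^ 2
          = ((t 0 + (D+1)⁻¹)/β)^2 + (S - t 0^2)/α^2 := by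
        rw [← Finset.sum_erase_add Finset.univ _ (Finset.mem_univ 0)]
        have e0 : f 0 = (t 0 + (D+1)⁻¹)/β := by rw [hfap]; simp
        have e1 : ∀ i ∈ Finset.univ.erase (0 : Fin d), f i ^ 2 = t i ^ 2 / α^2 := by
          intro i hi
          rw [hfap]
          simp only [Finset.mem_erase.mp hi |>.1, if_false, div_pow]
        rw [e0, Finset.sum_congr rfl e1, ← Finset.sum_div, hrest]
        ring
      rw [hsplit]
      have hid : ((t 0 + (D+1)⁻¹)/β)^2 + (S - t 0^2)/α^2
          = (((D+1)*t 0 + 1)^2 + (D^2-1)*(S - t 0^2))/D^2 := by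
        rw [div_pow, hα2, hβ]
        have h1 : (0:ℝ) < D := by linarith
        have h2 : (0:ℝ) < D + 1 := by linarith
        field_simp
      rw [hid, div_le_one (by positivity)]
      nlinarith [mul_nonneg (mul_nonneg (by linarith : (0:ℝ) ≤ D+1)
          (neg_nonneg.mpr ht0)) (by linarith : (0:ℝ) ≤ t 0 + 1),
        mul_nonneg (by linarith : (0:ℝ) ≤ D^2-1) (by linarith : (0:ℝ) ≤ 1 - S)]
    · -- c + T c₀ + (T ∘ₗ T₀) w = c + T v
      have hkey : c₀ + T₀ w = v := by
        apply b.repr.injective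
        ext i
        rw [map_add]
        have happ : (b.repr c₀ + b.repr (T₀ w)) i = b.repr c₀ i + b.repr (T₀ w) i := rfl
        rw [happ, hT₀, hrepr, hwrepr]
        have hc₀i : b.repr c₀ i = if i = 0 then -(D+1)⁻¹ else 0 := by
          rw [hc₀, OrthonormalBasis.repr_apply_apply, real_inner_smul_right, ← hb0, hbo]
          by_cases h : i = 0 <;> simp [h]
        rw [hc₀i, hfap, hμl]
        rw [show b.repr v i = t i from rfl]
        by_cases h : i = 0
        · subst h
          simp only [if_pos rfl, eq_self_iff_true, if_true]
          rw [hβ]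
          have h1 : D ≠ 0 := by linarith
          have h2 : D + 1 ≠ 0 := by linarith
          field_simp
          ring
        · simp only [if_neg h]
          rw [zero_add, mul_div_cancel₀ _ (by positivity : α ≠ 0)]
      dsimp only
      rw [LinearMap.comp_apply, add_assoc, ← map_add, hkey]
  · -- volume
    have himg : ∀ (c₁ : EuclideanSpace ℝ (Fin d))
        (S : EuclideanSpace ℝ (Fin d) →ₗ[ℝ] EuclideanSpace ℝ (Fin d)),
        volume ((fun v => c₁ + S v) '' closedBall 0 1)
          = ENNReal.ofReal |LinearMap.det S|
              * volume (closedBall (0 : EuclideanSpace ℝ (Fin d)) 1) := by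
      intro c₁ S
      have him : (fun v => c₁ + S v) '' closedBall 0 1
          = c₁ +ᵥ (S '' closedBall 0 1) := by
        rw [← Set.image_vadd, Set.image_image]
        rfl
      rw [him, measure_vadd, Measure.addHaar_image_linearMap]
    rw [himg, himg, LinearMap.det_comp, hdet₀]
    have hratio : |LinearMap.det T * (β * α^(d-1))|
        ≤ Real.exp (-1/(2*(D+1))) * |LinearMap.det T| := by
      rw [abs_mul, abs_of_nonneg (by positivity : (0:ℝ) ≤ β * α^(d-1)), mul_comm]
      apply mul_le_mul_of_nonneg_right _ (abs_nonneg _)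
      rw [hβ, hα, hD]
      exact ellipsoid_ratio_le hd
    refine le_trans (mul_le_mul_left (ENNReal.ofReal_le_ofReal hratio) _) ?_
    rw [ENNReal.ofReal_mul (Real.exp_pos _).le, mul_assoc]
end

section
/- Level sets of a Lipschitz convex function on a ball have substantial volume: let f : B̄(x̄, r) → ℝ be convex and M-Lipschitz on the closed ball B̄(x̄,r) ⊂ ℝ^d (M, r > 0), let f* be the minimum of f on B̄(x̄,r), and let α ∈ [0,1]. Then the set {x ∈ B̄(x̄,r) : f(x) ≤ f* + 2αMr} has Lebesgue volume at least α^d times the Lebesgue volume of B̄(x̄,r). -/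
open Metric MeasureTheory

theorem sublevel_set_volume_lower_bound {d : ℕ} (xbar xstar : EuclideanSpace ℝ (Fin d))
    (r M α : ℝ) (hr : 0 < r) (hM : 0 < M) (hα : α ∈ Set.Icc (0 : ℝ) 1)
    (f : EuclideanSpace ℝ (Fin d) → ℝ)
    (hconv : ConvexOn ℝ (closedBall xbar r) f)
    (hlip : ∀ x ∈ closedBall xbar r, ∀ y ∈ closedBall xbar r, |f x - f y| ≤ M * ‖x - y‖)
    (hxstar : xstar ∈ closedBall xbar r)
    (hmin : ∀ y ∈ closedBall xbar r, f xstar ≤ f y) :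
    ENNReal.ofReal (α ^ d) * volume (closedBall xbar r)
      ≤ volume {x | x ∈ closedBall xbar r ∧ f x ≤ f xstar + 2 * α * M * r} := by
  obtain ⟨hα0, hα1⟩ := hα
  have hsub : AffineMap.homothety xstar α '' closedBall xbar r ⊆
      {x | x ∈ closedBall xbar r ∧ f x ≤ f xstar + 2 * α * M * r} := by
    rintro _ ⟨y, hy, rfl⟩
    have hrepr : AffineMap.homothety xstar α y = α • y + (1 - α) • xstar := by
      simp only [AffineMap.homothety_apply, vsub_eq_sub, vadd_eq_add]
      rw [smul_sub]
      module
    have hmem : AffineMap.homothety xstar α y ∈ closedBall xbar r := by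
      rw [hrepr]
      exact convex_closedBall xbar r hy hxstar hα0 (by linarith) (by ring)
    refine ⟨hmem, ?_⟩
    have hconvineq := hconv.2 hy hxstar hα0 (by linarith : (0:ℝ) ≤ 1 - α) (by ring)
    have hdist : ‖y - xstar‖ ≤ 2 * r := by
      have h1 : dist y xstar ≤ dist y xbar + dist xbar xstar := dist_triangle _ _ _
      have h2 : dist y xbar ≤ r := mem_closedBall.1 hy
      have h3 : dist xbar xstar ≤ r := by rw [dist_comm]; exact mem_closedBall.1 hxstar
      calc ‖y - xstar‖ = dist y xstar := (dist_eq_norm _ _).symm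
        _ ≤ 2 * r := by linarith
    have hfy : f y - f xstar ≤ M * (2 * r) := by
      have := hlip y hy xstar hxstar
      have h' : f y - f xstar ≤ M * ‖y - xstar‖ := (abs_le.1 this).2
      have : M * ‖y - xstar‖ ≤ M * (2 * r) := by
        exact mul_le_mul_of_nonneg_left hdist hM.le
      linarith
    have : f (AffineMap.homothety xstar α y) ≤ α * f y + (1 - α) * f xstar := by
      rw [hrepr]; simpa using hconvineq
    have h2 : α * f y + (1 - α) * f xstar = f xstar + α * (f y - f xstar) := by ring
    have h3 : α * (f y - f xstar) ≤ α * (M * (2 * r)) :=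
      mul_le_mul_of_nonneg_left hfy hα0
    calc f (AffineMap.homothety xstar α y)
        ≤ α * f y + (1 - α) * f xstar := this
      _ = f xstar + α * (f y - f xstar) := h2
      _ ≤ f xstar + α * (M * (2 * r)) := by linarith
      _ = f xstar + 2 * α * M * r := by ring
  have hvol := Measure.addHaar_image_homothety (volume : Measure (EuclideanSpace ℝ (Fin d)))
    xstar α (closedBall xbar r)
  rw [finrank_euclideanSpace_fin, abs_of_nonneg (pow_nonneg hα0 d)] at hvol
  calc ENNReal.ofReal (α ^ d) * volume (closedBall xbar r)
      = volume (AffineMap.homothety xstar α '' closedBall xbar r) := hvol.symm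
    _ ≤ _ := measure_mono hsub
end

section
/- Volume-to-gap bound for cutting-plane methods: let f : B̄(x̄, r) → ℝ be convex and M-Lipschitz on the closed ball B̄(x̄,r) ⊂ ℝ^d (M, r > 0) with minimum value f*, let v ∈ ℝ with v ≥ f*, and let S ⊆ ℝ^d be a measurable set containing {x ∈ B̄(x̄,r) : f(x) < v}. Then min(v − f*, 2Mr) ≤ 2Mr · (vol(S)/vol(B̄(x̄,r)))^(1/d), where vol denotes Lebesgue volume. -/
open Metric MeasureTheory

theorem volume_to_gap_bound {d : ℕ} (xbar xstar : EuclideanSpace ℝ (Fin d))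
    (r M v : ℝ) (hr : 0 < r) (hM : 0 < M)
    (f : EuclideanSpace ℝ (Fin d) → ℝ)
    (hconv : ConvexOn ℝ (closedBall xbar r) f)
    (hlip : ∀ x ∈ closedBall xbar r, ∀ y ∈ closedBall xbar r, |f x - f y| ≤ M * ‖x - y‖)
    (hxstar : xstar ∈ closedBall xbar r)
    (hmin : ∀ y ∈ closedBall xbar r, f xstar ≤ f y)
    (hv : f xstar ≤ v)
    (S : Set (EuclideanSpace ℝ (Fin d))) (hSmeas : MeasurableSet S)
    (hS : {x | x ∈ closedBall xbar r ∧ f x < v} ⊆ S) :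
    ENNReal.ofReal (min (v - f xstar) (2 * M * r))
      ≤ ENNReal.ofReal (2 * M * r) *
          (volume S / volume (closedBall xbar r)) ^ ((1 : ℝ) / d) := by
  have h2Mr : 0 < 2 * M * r := by positivity
  -- trivial case d = 0
  rcases Nat.eq_zero_or_pos d with hd0 | hd
  · subst hd0
    simp only [Nat.cast_zero, div_zero, ENNReal.rpow_zero, mul_one]
    exact ENNReal.ofReal_le_ofReal (min_le_right _ _)
  set m : ℝ := min (v - f xstar) (2 * M * r) with hm
  rcases le_or_gt m 0 with hm0 | hm0
  · simp [ENNReal.ofReal_eq_zero.mpr hm0]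
  set t : ℝ := m / (2 * M * r) with ht
  have ht0 : 0 < t := div_pos hm0 h2Mr
  have ht1 : t ≤ 1 := (div_le_one h2Mr).mpr (min_le_right _ _)
  have htm : 2 * M * r * t = m := by
    rw [ht]; field_simp
  set c : EuclideanSpace ℝ (Fin d) := xstar + t • (xbar - xstar) with hc
  -- the small ball is contained in the strict sublevel set
  have hball : ball c (t * r) ⊆ {x | x ∈ closedBall xbar r ∧ f x < v} := by
    intro x hx
    rw [mem_ball, dist_eq_norm] at hx
    set z : EuclideanSpace ℝ (Fin d) := xstar + t⁻¹ • (x - xstar) with hz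
    have hxz : x = (1 - t) • xstar + t • z := by
      rw [hz, smul_add, smul_smul, mul_inv_cancel₀ ht0.ne', one_smul]
      module
    have hzball : z ∈ ball xbar r := by
      rw [mem_ball, dist_eq_norm]
      have : z - xbar = t⁻¹ • (x - c) := by
        rw [hz, hc]
        match_scalars <;> field_simp <;> ring
      rw [this, norm_smul, norm_inv, Real.norm_eq_abs, abs_of_pos ht0]
      calc t⁻¹ * ‖x - c‖ < t⁻¹ * (t * r) := by
            exact mul_lt_mul_of_pos_left hx (by positivity)
        _ = r := by field_simp
    have hzcb : z ∈ closedBall xbar r := ball_subset_closedBall hzball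
    have hzx : ‖z - xstar‖ < 2 * r := by
      calc ‖z - xstar‖ ≤ ‖z - xbar‖ + ‖xbar - xstar‖ := norm_sub_le_norm_sub_add_norm_sub _ _ _
        _ < r + r := by
            apply add_lt_add_of_lt_of_le
            · rw [← dist_eq_norm]; exact hzball
            · rw [← dist_eq_norm, dist_comm]; exact hxstar
        _ = 2 * r := by ring
    have hfz : f z < f xstar + 2 * M * r := by
      have h1 : |f z - f xstar| ≤ M * ‖z - xstar‖ := hlip z hzcb xstar hxstar
      have h2 : M * ‖z - xstar‖ < M * (2 * r) := mul_lt_mul_of_pos_left hzx hM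
      nlinarith [abs_le.mp h1]
    have hxcb : x ∈ closedBall xbar r := by
      rw [hxz]
      exact (convex_closedBall xbar r) hxstar hzcb (by linarith) ht0.le (by ring)
    refine ⟨hxcb, ?_⟩
    have hfx : f x ≤ (1 - t) * f xstar + t * f z := by
      rw [hxz]
      exact hconv.2 hxstar hzcb (by linarith) ht0.le (by ring)
    have hmv : m ≤ v - f xstar := min_le_left _ _
    calc f x ≤ (1 - t) * f xstar + t * f z := hfx
      _ < (1 - t) * f xstar + t * (f xstar + 2 * M * r) :=
          add_lt_add_right (mul_lt_mul_of_pos_left hfz ht0) _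
      _ = f xstar + 2 * M * r * t := by ring
      _ = f xstar + m := by rw [htm]
      _ ≤ v := by linarith
  -- volumes
  have hfr : Module.finrank ℝ (EuclideanSpace ℝ (Fin d)) = d := finrank_euclideanSpace_fin
  haveI : Nontrivial (EuclideanSpace ℝ (Fin d)) :=
    Module.nontrivial_of_finrank_pos (R := ℝ) (by rw [hfr]; exact hd)
  have hvol_small : volume (ball c (t * r)) = ENNReal.ofReal ((t * r) ^ d) * volume (ball (0 : EuclideanSpace ℝ (Fin d)) 1) := by
    rw [Measure.addHaar_ball_of_pos _ _ (by positivity), hfr]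
  have hvol_big : volume (closedBall xbar r) = ENNReal.ofReal (r ^ d) * volume (ball (0 : EuclideanSpace ℝ (Fin d)) 1) := by
    rw [Measure.addHaar_closedBall _ _ hr.le, hfr]
  have hBpos : volume (closedBall xbar r) ≠ 0 :=
    (measure_closedBall_pos volume xbar hr).ne'
  have hBfin : volume (closedBall xbar r) ≠ ⊤ := measure_closedBall_lt_top.ne
  -- key ratio estimate
  have hratio : ENNReal.ofReal (t ^ d) ≤ volume S / volume (closedBall xbar r) := by
    rw [ENNReal.le_div_iff_mul_le (Or.inl hBpos) (Or.inl hBfin)]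
    calc ENNReal.ofReal (t ^ d) * volume (closedBall xbar r)
        = ENNReal.ofReal ((t * r) ^ d) * volume (ball (0 : EuclideanSpace ℝ (Fin d)) 1) := by
          rw [hvol_big, ← mul_assoc, ← ENNReal.ofReal_mul (by positivity), mul_pow]
      _ = volume (ball c (t * r)) := hvol_small.symm
      _ ≤ volume S := measure_mono (hball.trans hS)
  have hrpow : ENNReal.ofReal t ≤ (volume S / volume (closedBall xbar r)) ^ ((1 : ℝ) / d) := by
    have h1 : (ENNReal.ofReal (t ^ d)) ^ ((1 : ℝ) / d) = ENNReal.ofReal t := by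
      rw [ENNReal.ofReal_rpow_of_nonneg (by positivity) (by positivity)]
      congr 1
      rw [← Real.rpow_natCast t d, ← Real.rpow_mul ht0.le]
      rw [mul_one_div, div_self (by exact_mod_cast hd.ne'), Real.rpow_one]
    rw [← h1]
    exact ENNReal.rpow_le_rpow hratio (by positivity)
  calc ENNReal.ofReal m = ENNReal.ofReal (2 * M * r) * ENNReal.ofReal t := by
        rw [← ENNReal.ofReal_mul h2Mr.le, htm]
    _ ≤ ENNReal.ofReal (2 * M * r) *
          (volume S / volume (closedBall xbar r)) ^ ((1 : ℝ) / d) :=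
        mul_le_mul_right hrpow _
end

section
/- One-step progress of the ball-restricted subproblem in the Klein model: let 0 < R ≤ 2r, let D = {y in the open unit ball of ℝ^d : d_K(0,y) ≤ r}, and let f : D → ℝ be geodesically convex on D. Let f* = min over D of f and let x ∈ D. Then inf{f(y) : y ∈ D, d_K(x,y) ≤ R} − f* ≤ (1 − R/(2r))·(f(x) − f*). -/
open scoped RealInnerProductSpace
open Metric MeasureTheory

/-- The Klein ball of radius `r` about the origin (inside the open unit ball). -/
noncomputable def kleinBall (d : ℕ) (r : ℝ) : Set (EuclideanSpace ℝ (Fin d)) :=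
  {y | ‖y‖ < 1 ∧ kleinDist 0 y ≤ r}

/-- Geodesic convexity in the Beltrami–Klein model: convexity along straight chords,
parameterized by Klein arclength. -/
def GeodesicallyConvexOn {d : ℕ} (D : Set (EuclideanSpace ℝ (Fin d)))
    (f : EuclideanSpace ℝ (Fin d) → ℝ) : Prop :=
  ∀ x ∈ D, ∀ y ∈ D, ∀ t ∈ Set.Icc (0 : ℝ) 1,
    f ((1 - t) • x + t • y) * kleinDist x y ≤
      (kleinDist x y - kleinDist x ((1 - t) • x + t • y)) * f x +
        kleinDist x ((1 - t) • x + t • y) * f y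

lemma arccosh_one : arccosh 1 = 0 := by
  simp [arccosh]

lemma arccosh_mono {u v : ℝ} (hu : 1 ≤ u) (huv : u ≤ v) : arccosh u ≤ arccosh v := by
  unfold arccosh
  have h0 : (0:ℝ) < u + Real.sqrt (u ^ 2 - 1) := by
    have := Real.sqrt_nonneg (u ^ 2 - 1); linarith
  apply Real.log_le_log h0
  have h1 : u ^ 2 - 1 ≤ v ^ 2 - 1 := by nlinarith
  have := Real.sqrt_le_sqrt h1
  linarith

lemma arctanh_mono {a b : ℝ} (ha : 0 ≤ a) (hab : a ≤ b) (hb : b < 1) :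
    arctanh a ≤ arctanh b := by
  unfold arctanh
  have h1a : (0:ℝ) < 1 - a := by linarith
  have h1b : (0:ℝ) < 1 - b := by linarith
  have hpos : (0:ℝ) < (1 + a) / (1 - a) := by positivity
  have hle : (1 + a) / (1 - a) ≤ (1 + b) / (1 - b) := by
    rw [div_le_div_iff₀ h1a h1b]; nlinarith
  have := Real.log_le_log hpos hle
  linarith

lemma arctanh_zero : arctanh 0 = 0 := by simp [arctanh]

lemma arccosh_eq_arctanh_add {a b : ℝ} (ha : 0 ≤ a) (ha1 : a < 1) (hb : 0 ≤ b) (hb1 : b < 1) :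
    arccosh ((1 + a * b) / (Real.sqrt (1 - a ^ 2) * Real.sqrt (1 - b ^ 2)))
      = arctanh a + arctanh b := by
  have ha2 : (0:ℝ) < 1 - a ^ 2 := by nlinarith
  have hb2 : (0:ℝ) < 1 - b ^ 2 := by nlinarith
  set D := Real.sqrt (1 - a ^ 2) * Real.sqrt (1 - b ^ 2) with hD
  have hDpos : 0 < D := mul_pos (Real.sqrt_pos.2 ha2) (Real.sqrt_pos.2 hb2)
  have hD2 : D ^ 2 = (1 - a ^ 2) * (1 - b ^ 2) := by
    rw [hD, mul_pow, Real.sq_sqrt ha2.le, Real.sq_sqrt hb2.le]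
  have harg : ((1 + a * b) / D) ^ 2 - 1 = ((a + b) / D) ^ 2 := by
    rw [div_pow, div_pow, hD2]
    field_simp
    ring
  have hsq : Real.sqrt (((1 + a * b) / D) ^ 2 - 1) = (a + b) / D := by
    rw [harg, Real.sqrt_sq (by positivity)]
  unfold arccosh
  rw [hsq]
  have hsum : (1 + a * b) / D + (a + b) / D = (1 + a) * (1 + b) / D := by
    rw [← add_div]; ring_nf
  rw [hsum]
  have p1a : (0:ℝ) < 1 + a := by linarith
  have p2a : (0:ℝ) < 1 - a := by linarith
  have p1b : (0:ℝ) < 1 + b := by linarith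
  have p2b : (0:ℝ) < 1 - b := by linarith
  have hlogD : Real.log D = (Real.log (1 + a) + Real.log (1 - a)
      + Real.log (1 + b) + Real.log (1 - b)) / 2 := by
    rw [hD, Real.log_mul (by positivity) (by positivity),
      Real.log_sqrt ha2.le, Real.log_sqrt hb2.le]
    have h1 : (1:ℝ) - a ^ 2 = (1 + a) * (1 - a) := by ring
    have h2 : (1:ℝ) - b ^ 2 = (1 + b) * (1 - b) := by ring
    rw [h1, h2, Real.log_mul (by positivity) (by positivity),
      Real.log_mul (by positivity) (by positivity)]
    ring
  rw [Real.log_div (by positivity) (ne_of_gt hDpos),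
    Real.log_mul (by positivity) (by positivity), hlogD]
  unfold arctanh
  rw [Real.log_div (by positivity) (by positivity), Real.log_div (by positivity) (by positivity)]
  ring

lemma klein_arg_ge_one {d : ℕ} {x y : EuclideanSpace ℝ (Fin d)} (hx : ‖x‖ < 1) (hy : ‖y‖ < 1) :
    1 ≤ (1 - ⟪x, y⟫) / (Real.sqrt (1 - ‖x‖ ^ 2) * Real.sqrt (1 - ‖y‖ ^ 2)) := by
  have ha2 : (0:ℝ) < 1 - ‖x‖ ^ 2 := by nlinarith [norm_nonneg x]
  have hb2 : (0:ℝ) < 1 - ‖y‖ ^ 2 := by nlinarith [norm_nonneg y]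
  have hDpos : 0 < Real.sqrt (1 - ‖x‖ ^ 2) * Real.sqrt (1 - ‖y‖ ^ 2) :=
    mul_pos (Real.sqrt_pos.2 ha2) (Real.sqrt_pos.2 hb2)
  rw [le_div_iff₀ hDpos, one_mul]
  have hcs : ⟪x, y⟫ ≤ ‖x‖ * ‖y‖ := real_inner_le_norm x y
  have h1 : Real.sqrt (1 - ‖x‖ ^ 2) * Real.sqrt (1 - ‖y‖ ^ 2)
      = Real.sqrt ((1 - ‖x‖ ^ 2) * (1 - ‖y‖ ^ 2)) := (Real.sqrt_mul ha2.le _).symm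
  have h2 : Real.sqrt ((1 - ‖x‖ ^ 2) * (1 - ‖y‖ ^ 2)) ≤ 1 - ‖x‖ * ‖y‖ := by
    have hnn : (0:ℝ) ≤ 1 - ‖x‖ * ‖y‖ := by nlinarith [norm_nonneg x, norm_nonneg y]
    rw [show (1:ℝ) - ‖x‖ * ‖y‖ = Real.sqrt ((1 - ‖x‖ * ‖y‖) ^ 2) from
      (Real.sqrt_sq hnn).symm]
    apply Real.sqrt_le_sqrt
    nlinarith [sq_nonneg (‖x‖ - ‖y‖)]
  linarith

lemma kleinDist_le_sum {d : ℕ} {x y : EuclideanSpace ℝ (Fin d)} (hx : ‖x‖ < 1) (hy : ‖y‖ < 1) :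
    kleinDist x y ≤ arctanh ‖x‖ + arctanh ‖y‖ := by
  rw [← arccosh_eq_arctanh_add (norm_nonneg x) hx (norm_nonneg y) hy]
  unfold kleinDist
  apply arccosh_mono (klein_arg_ge_one hx hy)
  have ha2 : (0:ℝ) < 1 - ‖x‖ ^ 2 := by nlinarith [norm_nonneg x]
  have hb2 : (0:ℝ) < 1 - ‖y‖ ^ 2 := by nlinarith [norm_nonneg y]
  have hDpos : 0 < Real.sqrt (1 - ‖x‖ ^ 2) * Real.sqrt (1 - ‖y‖ ^ 2) :=
    mul_pos (Real.sqrt_pos.2 ha2) (Real.sqrt_pos.2 hb2)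
  have hnum : 1 - ⟪x, y⟫ ≤ 1 + ‖x‖ * ‖y‖ := by
    have h := abs_le.1 (abs_real_inner_le_norm x y)
    linarith [h.1]
  gcongr

lemma kleinDist_self {d : ℕ} {x : EuclideanSpace ℝ (Fin d)} (hx : ‖x‖ < 1) :
    kleinDist x x = 0 := by
  have ha2 : (0:ℝ) < 1 - ‖x‖ ^ 2 := by nlinarith [norm_nonneg x]
  unfold kleinDist
  rw [real_inner_self_eq_norm_sq, Real.mul_self_sqrt ha2.le, div_self (ne_of_gt ha2),
    arccosh_one]

lemma kleinDist_zero_left {d : ℕ} {y : EuclideanSpace ℝ (Fin d)} (hy : ‖y‖ < 1) :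
    kleinDist 0 y = arctanh ‖y‖ := by
  have h := arccosh_eq_arctanh_add (a := (0:ℝ)) (b := ‖y‖) le_rfl one_pos (norm_nonneg y) hy
  rw [arctanh_zero, zero_add] at h
  rw [← h]
  unfold kleinDist
  congr 1
  rw [inner_zero_left, norm_zero]
  norm_num

theorem subproblem_one_step_progress {d : ℕ} (r R : ℝ) (hR : 0 < R) (hRr : R ≤ 2 * r)
    (f : EuclideanSpace ℝ (Fin d) → ℝ)
    (hconv : GeodesicallyConvexOn (kleinBall d r) f)
    (xstar : EuclideanSpace ℝ (Fin d)) (hxstar : xstar ∈ kleinBall d r)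
    (hmin : ∀ y ∈ kleinBall d r, f xstar ≤ f y)
    (x : EuclideanSpace ℝ (Fin d)) (hx : x ∈ kleinBall d r) :
    sInf (f '' {y ∈ kleinBall d r | kleinDist x y ≤ R}) - f xstar
      ≤ (1 - R / (2 * r)) * (f x - f xstar) := by
  obtain ⟨hx1, hx2⟩ := hx
  obtain ⟨hs1, hs2⟩ := hxstar
  have h2r : 0 < 2 * r := lt_of_lt_of_le hR hRr
  have hfs : f xstar ≤ f x := hmin x ⟨hx1, hx2⟩
  have hfac : 0 ≤ 1 - R / (2 * r) := by
    have : R / (2 * r) ≤ 1 := by rw [div_le_one h2r]; linarith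
    linarith
  have hx2' : arctanh ‖x‖ ≤ r := by rwa [kleinDist_zero_left hx1] at hx2
  have hs2' : arctanh ‖xstar‖ ≤ r := by rwa [kleinDist_zero_left hs1] at hs2
  have hbdd : BddBelow (f '' {y ∈ kleinBall d r | kleinDist x y ≤ R}) := by
    refine ⟨f xstar, ?_⟩
    rintro v ⟨y, ⟨hyD, _⟩, rfl⟩
    exact hmin y hyD
  by_cases hcase : kleinDist x xstar ≤ R
  · have hmem : f xstar ∈ f '' {y ∈ kleinBall d r | kleinDist x y ≤ R} :=
      ⟨xstar, ⟨⟨hs1, hs2⟩, hcase⟩, rfl⟩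
    have h := csInf_le hbdd hmem
    nlinarith [mul_nonneg hfac (sub_nonneg.2 hfs)]
  · push_neg at hcase
    have hL2r : kleinDist x xstar ≤ 2 * r := by
      have h := kleinDist_le_sum hx1 hs1
      linarith
    set c : ℝ → EuclideanSpace ℝ (Fin d) := fun t => (1 - t) • x + t • xstar with hc
    have hnb : ∀ t ∈ Set.Icc (0:ℝ) 1, ‖c t‖ ≤ (1 - t) * ‖x‖ + t * ‖xstar‖ := by
      intro t ht
      calc ‖c t‖ ≤ ‖(1 - t) • x‖ + ‖t • xstar‖ := norm_add_le _ _
        _ = (1 - t) * ‖x‖ + t * ‖xstar‖ := by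
            rw [norm_smul, norm_smul, Real.norm_eq_abs, Real.norm_eq_abs,
              abs_of_nonneg (by linarith [ht.2]), abs_of_nonneg ht.1]
    have hcnorm : ∀ t ∈ Set.Icc (0:ℝ) 1, ‖c t‖ < 1 := by
      intro t ht
      have h := hnb t ht
      have hkey : 0 < (1 - t) * (1 - ‖x‖) + t * (1 - ‖xstar‖) := by
        rcases lt_or_eq_of_le ht.1 with htp | htp
        · have h1 : 0 < t * (1 - ‖xstar‖) := mul_pos htp (by linarith)
          nlinarith [mul_nonneg (by linarith [ht.2] : (0:ℝ) ≤ 1 - t)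
            (by linarith : (0:ℝ) ≤ 1 - ‖x‖)]
        · rw [← htp]; simp; linarith
      nlinarith
    have hcball : ∀ t ∈ Set.Icc (0:ℝ) 1, c t ∈ kleinBall d r := by
      intro t ht
      refine ⟨hcnorm t ht, ?_⟩
      rw [kleinDist_zero_left (hcnorm t ht)]
      have hmax : ‖c t‖ ≤ max ‖x‖ ‖xstar‖ := by
        have h := hnb t ht
        have h1 : ‖x‖ ≤ max ‖x‖ ‖xstar‖ := le_max_left _ _
        have h2 : ‖xstar‖ ≤ max ‖x‖ ‖xstar‖ := le_max_right _ _
        nlinarith [ht.1, ht.2]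
      have hmaxlt : max ‖x‖ ‖xstar‖ < 1 := max_lt hx1 hs1
      have hmono := arctanh_mono (norm_nonneg _) hmax hmaxlt
      rcases max_cases ‖x‖ ‖xstar‖ with ⟨heq, _⟩ | ⟨heq, _⟩ <;> rw [heq] at hmono <;> linarith
    -- continuity of t ↦ kleinDist x (c t) on [0,1]
    have hccont : Continuous c := by
      apply Continuous.add
      · exact (continuous_const.sub continuous_id).smul continuous_const
      · exact continuous_id.smul continuous_const
    have hinner : Continuous fun t => ⟪x, c t⟫ := continuous_const.inner hccont
    have hden : Continuous fun t => Real.sqrt (1 - ‖x‖ ^ 2) * Real.sqrt (1 - ‖c t‖ ^ 2) :=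
      continuous_const.mul ((continuous_const.sub (hccont.norm.pow 2)).sqrt)
    have hdenpos : ∀ t ∈ Set.Icc (0:ℝ) 1,
        0 < Real.sqrt (1 - ‖x‖ ^ 2) * Real.sqrt (1 - ‖c t‖ ^ 2) := by
      intro t ht
      have h1 : (0:ℝ) < 1 - ‖x‖ ^ 2 := by nlinarith [norm_nonneg x]
      have h2 : (0:ℝ) < 1 - ‖c t‖ ^ 2 := by nlinarith [norm_nonneg (c t), hcnorm t ht]
      exact mul_pos (Real.sqrt_pos.2 h1) (Real.sqrt_pos.2 h2)
    have hF : ContinuousOn (fun t =>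
        (1 - ⟪x, c t⟫) / (Real.sqrt (1 - ‖x‖ ^ 2) * Real.sqrt (1 - ‖c t‖ ^ 2)))
        (Set.Icc (0:ℝ) 1) :=
      (continuous_const.sub hinner).continuousOn.div hden.continuousOn
        (fun t ht => ne_of_gt (hdenpos t ht))
    have hFge : ∀ t ∈ Set.Icc (0:ℝ) 1,
        1 ≤ (1 - ⟪x, c t⟫) / (Real.sqrt (1 - ‖x‖ ^ 2) * Real.sqrt (1 - ‖c t‖ ^ 2)) :=
      fun t ht => klein_arg_ge_one hx1 (hcnorm t ht)
    have hg : ContinuousOn (fun t => kleinDist x (c t)) (Set.Icc (0:ℝ) 1) := by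
      unfold kleinDist arccosh
      apply ContinuousOn.log
      · exact hF.add (((hF.pow 2).sub continuousOn_const).sqrt)
      · intro t ht
        have h1 := hFge t ht
        have h2 := Real.sqrt_nonneg
          (((1 - ⟪x, c t⟫) / (Real.sqrt (1 - ‖x‖ ^ 2) * Real.sqrt (1 - ‖c t‖ ^ 2))) ^ 2 - 1)
        positivity
    have hg0 : (fun t => kleinDist x (c t)) 0 = 0 := by
      have hc0 : c 0 = x := by simp [hc]
      simp only [hc0]
      exact kleinDist_self hx1
    have hg1 : (fun t => kleinDist x (c t)) 1 = kleinDist x xstar := by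
      have hc1 : c 1 = xstar := by simp [hc]
      simp only [hc1]
    have hivt := intermediate_value_Icc (by norm_num : (0:ℝ) ≤ 1) hg
    have hRmem : R ∈ Set.Icc ((fun t => kleinDist x (c t)) 0) ((fun t => kleinDist x (c t)) 1) := by
      rw [hg0, hg1]; exact ⟨hR.le, hcase.le⟩
    obtain ⟨t, ht, hgt⟩ := hivt hRmem
    simp only at hgt
    -- apply convexity
    have hkey := hconv x ⟨hx1, hx2⟩ xstar ⟨hs1, hs2⟩ t ht
    have hceq : (1 - t) • x + t • xstar = c t := by rw [hc]
    rw [hceq, hgt] at hkey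
    set L := kleinDist x xstar with hL
    have hLpos : 0 < L := hR.trans hcase
    have hfz : f (c t) ≤ (1 - R / L) * f x + (R / L) * f xstar := by
      rw [← mul_le_mul_iff_of_pos_right hLpos]
      calc f (c t) * L ≤ (L - R) * f x + R * f xstar := hkey
        _ = ((1 - R / L) * f x + (R / L) * f xstar) * L := by
            field_simp
    have hmem : f (c t) ∈ f '' {y ∈ kleinBall d r | kleinDist x y ≤ R} :=
      ⟨c t, ⟨hcball t ht, le_of_eq hgt⟩, rfl⟩
    have hsinf := csInf_le hbdd hmem
    have hRL : R / (2 * r) ≤ R / L := by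
      rw [div_le_div_iff₀ h2r hLpos]
      nlinarith
    have e2 : (1 - R / L) * (f x - f xstar) ≤ (1 - R / (2 * r)) * (f x - f xstar) :=
      mul_le_mul_of_nonneg_right (by linarith) (by linarith)
    have e1 : (1 - R / L) * f x + (R / L) * f xstar - f xstar
        = (1 - R / L) * (f x - f xstar) := by ring
    linarith [hsinf, hfz, e1, e2]
end

section
/- Restart scheme for geodesically convex optimization on hyperbolic space via the Klein model: let 0 < R ≤ r, ε ∈ (0,1), M > 0, let D = {y in the open unit ball of ℝ^d : d_K(0,y) ≤ r}, and let f : D → ℝ be geodesically convex on D and M-Lipschitz with respect to d_K, with minimum value f*. Let (x_k) be a sequence with x_0 = 0 such that for every k, x_{k+1} ∈ D with d_K(x_k, x_{k+1}) ≤ R and f(x_{k+1}) ≤ inf{f(y) : y ∈ D, d_K(x_k,y) ≤ R} + (ε/4)·M·R. Then for every integer T ≥ (2r/R)·log(2/ε), f(x_T) − f* ≤ ε·M·r. -/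
open scoped RealInnerProductSpace
open Metric MeasureTheory

lemma arccosh_mono_s15 {x y : ℝ} (hx : 1 ≤ x) (hxy : x ≤ y) : arccosh x ≤ arccosh y := by
  have h1 : (0:ℝ) < x + Real.sqrt (x ^ 2 - 1) := by positivity
  apply Real.log_le_log h1
  have : Real.sqrt (x ^ 2 - 1) ≤ Real.sqrt (y ^ 2 - 1) := Real.sqrt_le_sqrt (by nlinarith)
  linarith

lemma arccosh_nonneg {x : ℝ} (hx : 1 ≤ x) : 0 ≤ arccosh x := by
  rw [← arccosh_one]; exact arccosh_mono_s15 le_rfl hx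

lemma kleinDist_nonneg {d : ℕ} {x y : EuclideanSpace ℝ (Fin d)} (hx : ‖x‖ < 1) (hy : ‖y‖ < 1) :
    0 ≤ kleinDist x y := arccosh_nonneg (klein_arg_ge_one hx hy)

lemma kleinDist_zero_left_s15 {d : ℕ} (y : EuclideanSpace ℝ (Fin d)) :
    kleinDist 0 y = arccosh (1 / Real.sqrt (1 - ‖y‖ ^ 2)) := by
  simp [kleinDist]

lemma arccosh_inv_sqrt {a : ℝ} (ha : 0 ≤ a) (ha1 : a < 1) :
    arccosh (1 / Real.sqrt (1 - a ^ 2)) = Real.log ((1 + a) / Real.sqrt (1 - a ^ 2)) := by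
  have hA : (0:ℝ) < Real.sqrt (1 - a ^ 2) := Real.sqrt_pos.2 (by nlinarith)
  have hA2 : Real.sqrt (1 - a ^ 2) ^ 2 = 1 - a ^ 2 := Real.sq_sqrt (by nlinarith)
  have key : (1 / Real.sqrt (1 - a ^ 2)) ^ 2 - 1 = (a / Real.sqrt (1 - a ^ 2)) ^ 2 := by
    field_simp
    nlinarith
  rw [arccosh, key, Real.sqrt_sq (by positivity)]
  congr 1
  field_simp
open scoped RealInnerProductSpace

lemma kleinDist_zero_mono {d : ℕ} {u v : EuclideanSpace ℝ (Fin d)} (h : ‖u‖ ≤ ‖v‖)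
    (hv : ‖v‖ < 1) : kleinDist 0 u ≤ kleinDist 0 v := by
  rw [kleinDist_zero_left_s15, kleinDist_zero_left_s15]
  have hu : ‖u‖ < 1 := lt_of_le_of_lt h hv
  have h0u : (0:ℝ) ≤ ‖u‖ := norm_nonneg u
  have hB : (0:ℝ) < Real.sqrt (1 - ‖v‖ ^ 2) := Real.sqrt_pos.2 (by nlinarith [norm_nonneg v])
  have hA : (0:ℝ) < Real.sqrt (1 - ‖u‖ ^ 2) := Real.sqrt_pos.2 (by nlinarith)
  have hle : Real.sqrt (1 - ‖v‖ ^ 2) ≤ Real.sqrt (1 - ‖u‖ ^ 2) :=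
    Real.sqrt_le_sqrt (by nlinarith)
  have h1 : (1:ℝ) ≤ 1 / Real.sqrt (1 - ‖u‖ ^ 2) := by
    rw [le_div_iff₀ hA, one_mul]
    exact Real.sqrt_le_one.2 (by nlinarith)
  exact arccosh_mono_s15 h1 (div_le_div_of_nonneg_left one_pos.le hB hle)

lemma kleinDist_triangle_zero {d : ℕ} {x y : EuclideanSpace ℝ (Fin d)}
    (hx : ‖x‖ < 1) (hy : ‖y‖ < 1) :
    kleinDist x y ≤ kleinDist 0 x + kleinDist 0 y := by
  set a := ‖x‖; set b := ‖y‖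
  have ha : 0 ≤ a := norm_nonneg x
  have hb : 0 ≤ b := norm_nonneg y
  have hA : (0:ℝ) < Real.sqrt (1 - a ^ 2) := Real.sqrt_pos.2 (by nlinarith)
  have hB : (0:ℝ) < Real.sqrt (1 - b ^ 2) := Real.sqrt_pos.2 (by nlinarith)
  have hA2 : Real.sqrt (1 - a ^ 2) ^ 2 = 1 - a ^ 2 := Real.sq_sqrt (by nlinarith)
  have hB2 : Real.sqrt (1 - b ^ 2) ^ 2 = 1 - b ^ 2 := Real.sq_sqrt (by nlinarith)
  set A := Real.sqrt (1 - a ^ 2)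
  set B := Real.sqrt (1 - b ^ 2)
  have ht : ⟪x, y⟫ ≤ a * b := (abs_le.1 (abs_real_inner_le_norm x y)).2
  have ht' : -(a*b) ≤ ⟪x, y⟫ := (abs_le.1 (abs_real_inner_le_norm x y)).1
  have step1 : kleinDist x y ≤ arccosh ((1 + a * b) / (A * B)) := by
    apply arccosh_mono_s15 (klein_arg_ge_one hx hy)
    have hden : (0:ℝ) < A * B := by positivity
    gcongr
    linarith
  have step2 : arccosh ((1 + a * b) / (A * B)) = kleinDist 0 x + kleinDist 0 y := by
    rw [kleinDist_zero_left_s15, kleinDist_zero_left_s15, arccosh_inv_sqrt ha hx,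
      arccosh_inv_sqrt hb hy]
    have key : ((1 + a * b) / (A * B)) ^ 2 - 1 = ((a + b) / (A * B)) ^ 2 := by
      field_simp
      nlinarith
    rw [arccosh, key, Real.sqrt_sq (by positivity)]
    rw [← Real.log_mul (by positivity) (by positivity)]
    congr 1
    field_simp
    have e : A * B * (√(1 - a ^ 2))⁻¹ * (√(1 - b ^ 2))⁻¹ = 1 := by
      show A * B * A⁻¹ * B⁻¹ = 1
      field_simp
    linear_combination (-(a*b+a+b+1)) * e
  linarith [step1, step2.le]
open scoped RealInnerProductSpace

lemma seg_norm_le {d : ℕ} (x y : EuclideanSpace ℝ (Fin d)) {t : ℝ} (ht : t ∈ Set.Icc (0:ℝ) 1) :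
    ‖(1 - t) • x + t • y‖ ≤ max ‖x‖ ‖y‖ := by
  have h1 : ‖(1 - t) • x + t • y‖ ≤ (1 - t) * ‖x‖ + t * ‖y‖ := by
    refine (norm_add_le _ _).trans ?_
    rw [norm_smul, norm_smul, Real.norm_eq_abs, Real.norm_eq_abs,
      abs_of_nonneg (by linarith [ht.2]), abs_of_nonneg ht.1]
  have hxm : ‖x‖ ≤ max ‖x‖ ‖y‖ := le_max_left _ _
  have hym : ‖y‖ ≤ max ‖x‖ ‖y‖ := le_max_right _ _
  nlinarith [ht.1, ht.2]

lemma seg_mem_kleinBall {d : ℕ} {r : ℝ} {x y : EuclideanSpace ℝ (Fin d)}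
    (hx : ‖x‖ < 1 ∧ kleinDist 0 x ≤ r) (hy : ‖y‖ < 1 ∧ kleinDist 0 y ≤ r)
    {t : ℝ} (ht : t ∈ Set.Icc (0:ℝ) 1) :
    ‖(1 - t) • x + t • y‖ < 1 ∧ kleinDist 0 ((1 - t) • x + t • y) ≤ r := by
  have hn := seg_norm_le x y ht
  have hlt : ‖(1 - t) • x + t • y‖ < 1 := lt_of_le_of_lt hn (max_lt hx.1 hy.1)
  refine ⟨hlt, ?_⟩
  rcases le_total ‖x‖ ‖y‖ with h | h
  · have := kleinDist_zero_mono (hn.trans_eq (max_eq_right h)) hy.1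
    linarith [hy.2]
  · have := kleinDist_zero_mono (hn.trans_eq (max_eq_left h)) hx.1
    linarith [hx.2]

lemma klein_ivt {d : ℕ} {x y : EuclideanSpace ℝ (Fin d)} (hx : ‖x‖ < 1) (hy : ‖y‖ < 1)
    {R : ℝ} (hR0 : 0 ≤ R) (hR : R ≤ kleinDist x y) :
    ∃ t ∈ Set.Icc (0:ℝ) 1, kleinDist x ((1 - t) • x + t • y) = R := by
  set z : ℝ → EuclideanSpace ℝ (Fin d) := fun t => (1 - t) • x + t • y with hzdef
  set g : ℝ → ℝ := fun t => kleinDist x (z t) with hgdef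
  have hz : ∀ t ∈ Set.Icc (0:ℝ) 1, ‖z t‖ < 1 := fun t ht =>
    lt_of_le_of_lt (seg_norm_le x y ht) (max_lt hx hy)
  have hzc : Continuous z := by continuity
  have hF : ContinuousOn (fun t => (1 - ⟪x, z t⟫) /
      (Real.sqrt (1 - ‖x‖ ^ 2) * Real.sqrt (1 - ‖z t‖ ^ 2))) (Set.Icc 0 1) := by
    apply ContinuousOn.div
    · exact (continuous_const.sub (Continuous.inner continuous_const hzc)).continuousOn
    · exact (continuous_const.mul ((continuous_const.sub
        ((hzc.norm).pow 2)).sqrt)).continuousOn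
    · intro t ht
      have h1 : (0:ℝ) < Real.sqrt (1 - ‖x‖ ^ 2) := Real.sqrt_pos.2 (by nlinarith [norm_nonneg x])
      have h2 : (0:ℝ) < Real.sqrt (1 - ‖z t‖ ^ 2) :=
        Real.sqrt_pos.2 (by nlinarith [norm_nonneg (z t), hz t ht])
      positivity
  have hgc : ContinuousOn g (Set.Icc 0 1) := by
    have : g = fun t => Real.log ((1 - ⟪x, z t⟫) /
        (Real.sqrt (1 - ‖x‖ ^ 2) * Real.sqrt (1 - ‖z t‖ ^ 2)) +
        Real.sqrt (((1 - ⟪x, z t⟫) /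
        (Real.sqrt (1 - ‖x‖ ^ 2) * Real.sqrt (1 - ‖z t‖ ^ 2))) ^ 2 - 1)) := rfl
    rw [this]
    apply ContinuousOn.log
    · exact hF.add ((hF.pow 2).sub continuousOn_const).sqrt
    · intro t ht
      have harg := klein_arg_ge_one hx (hz t ht)
      have : (0:ℝ) ≤ Real.sqrt (((1 - ⟪x, z t⟫) /
        (Real.sqrt (1 - ‖x‖ ^ 2) * Real.sqrt (1 - ‖z t‖ ^ 2))) ^ 2 - 1) := Real.sqrt_nonneg _
      intro hc
      linarith
  have hg0 : g 0 = 0 := by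
    have : z 0 = x := by simp [hzdef]
    rw [hgdef]; simp only; rw [this]; exact kleinDist_self hx
  have hg1 : g 1 = kleinDist x y := by
    have : z 1 = y := by simp [hzdef]
    rw [hgdef]; simp only; rw [this]
  have hmem : R ∈ Set.Icc (g 0) (g 1) := by rw [hg0, hg1]; exact ⟨hR0, hR⟩
  have := intermediate_value_Icc (zero_le_one) hgc hmem
  obtain ⟨t, ht, hgt⟩ := this
  exact ⟨t, ht, hgt⟩
open Metric MeasureTheory



theorem restart_scheme {d : ℕ} (r R ε M : ℝ) (hR : 0 < R) (hRr : R ≤ r)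
    (hε0 : 0 < ε) (hε1 : ε < 1) (hM : 0 < M)
    (f : EuclideanSpace ℝ (Fin d) → ℝ)
    (hconv : GeodesicallyConvexOn (kleinBall d r) f)
    (hlip : ∀ x ∈ kleinBall d r, ∀ y ∈ kleinBall d r, |f x - f y| ≤ M * kleinDist x y)
    (xstar : EuclideanSpace ℝ (Fin d)) (hxstar : xstar ∈ kleinBall d r)
    (hmin : ∀ y ∈ kleinBall d r, f xstar ≤ f y)
    (x : ℕ → EuclideanSpace ℝ (Fin d)) (hx0 : x 0 = 0)
    (hstep : ∀ k : ℕ, x (k + 1) ∈ kleinBall d r ∧ kleinDist (x k) (x (k + 1)) ≤ R ∧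
      f (x (k + 1)) ≤ sInf (f '' {y ∈ kleinBall d r | kleinDist (x k) y ≤ R}) + (ε / 4) * M * R)
    (T : ℕ) (hT : (2 * r / R) * Real.log (2 / ε) ≤ T) :
    f (x T) - f xstar ≤ ε * M * r := by
  have hr : 0 < r := lt_of_lt_of_le hR hRr
  have hmem0 : (0 : EuclideanSpace ℝ (Fin d)) ∈ kleinBall d r := by
    constructor
    · rw [norm_zero]; exact one_pos
    · rw [kleinDist_self (by rw [norm_zero]; exact one_pos)]; positivity
  have hxmem : ∀ k, x k ∈ kleinBall d r := by
    intro k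
    cases k with
    | zero => rw [hx0]; exact hmem0
    | succ n => exact (hstep n).1
  have hxstar1 : ‖xstar‖ < 1 := hxstar.1
  set δ : ℕ → ℝ := fun k => f (x k) - f xstar with hδdef
  have hδnn : ∀ k, 0 ≤ δ k := fun k => sub_nonneg.2 (hmin _ (hxmem k))
  set q : ℝ := R / (2 * r) with hqdef
  have hq0 : 0 < q := by positivity
  have hq1 : q ≤ 1 / 2 := by
    rw [hqdef, div_le_div_iff₀ (by positivity) (by positivity)]
    linarith
  set c : ℝ := (ε / 4) * M * R with hcdef
  have hc0 : 0 ≤ c := by positivity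
  have hrec : ∀ k, δ (k + 1) ≤ (1 - q) * δ k + c := by
    intro k
    obtain ⟨hmem, hdist, hbound⟩ := hstep k
    have hbdd : BddBelow (f '' {y ∈ kleinBall d r | kleinDist (x k) y ≤ R}) := by
      refine ⟨f xstar, ?_⟩
      rintro v ⟨y, ⟨hy1, hy2⟩, rfl⟩
      exact hmin y hy1
    have hxk := hxmem k
    have hxk1 : ‖x k‖ < 1 := hxk.1
    by_cases hcase : kleinDist (x k) xstar ≤ R
    · have hin : f xstar ∈ f '' {y ∈ kleinBall d r | kleinDist (x k) y ≤ R} :=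
        ⟨xstar, ⟨hxstar, hcase⟩, rfl⟩
      have hsinf := csInf_le hbdd hin
      have h1 : 0 ≤ (1 - q) * δ k := mul_nonneg (by linarith) (hδnn k)
      simp only [hδdef] at h1 ⊢
      linarith
    · push_neg at hcase
      obtain ⟨t, ht, hteq⟩ := klein_ivt hxk1 hxstar1 hR.le hcase.le
      set y := (1 - t) • x k + t • xstar with hydef
      have hymem : y ∈ kleinBall d r := seg_mem_kleinBall hxk hxstar ht
      have hin : f y ∈ f '' {y ∈ kleinBall d r | kleinDist (x k) y ≤ R} :=
        ⟨y, ⟨hymem, hteq.le⟩, rfl⟩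
      have hsinf := csInf_le hbdd hin
      have hcv := hconv (x k) hxk xstar hxstar t ht
      rw [hteq] at hcv
      set D := kleinDist (x k) xstar with hDdef
      have hD0 : 0 < D := lt_trans hR hcase
      have hD2r : D ≤ 2 * r := by
        have h3 := kleinDist_triangle_zero hxk1 hxstar1
        have h4 : kleinDist 0 (x k) ≤ r := hxk.2
        have h5 : kleinDist 0 xstar ≤ r := hxstar.2
        calc D = kleinDist (x k) xstar := rfl
          _ ≤ kleinDist 0 (x k) + kleinDist 0 xstar := h3
          _ ≤ 2 * r := by linarith
      have hqD : q * D ≤ R := by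
        have : q * D ≤ q * (2 * r) := mul_le_mul_of_nonneg_left hD2r hq0.le
        have h6 : q * (2 * r) = R := by rw [hqdef, div_mul_cancel₀ _ (by positivity)]
        linarith
      have h7 : q * D * δ k ≤ R * δ k := mul_le_mul_of_nonneg_right hqD (hδnn k)
      have h2 : (f y - f xstar) * D ≤ ((1 - q) * δ k) * D := by
        simp only [hδdef] at h7 ⊢
        nlinarith [hcv]
      have h1 : f y - f xstar ≤ (1 - q) * δ k := le_of_mul_le_mul_right h2 hD0
      simp only [hδdef] at h1 ⊢
      linarith
  have hiter : ∀ k, δ k ≤ (1 - q) ^ k * δ 0 + c / q := by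
    intro k
    induction k with
    | zero =>
      have : 0 ≤ c / q := by positivity
      simp only [pow_zero, one_mul]
      linarith
    | succ n ih =>
      have h1q : (0:ℝ) ≤ 1 - q := by linarith
      calc δ (n + 1) ≤ (1 - q) * δ n + c := hrec n
        _ ≤ (1 - q) * ((1 - q) ^ n * δ 0 + c / q) + c :=
            by nlinarith [mul_le_mul_of_nonneg_left ih h1q]
        _ = (1 - q) ^ (n + 1) * δ 0 + c / q := by
            field_simp
            ring
  have hδ0 : δ 0 ≤ M * r := by
    have h1 := hlip (x 0) (hxmem 0) xstar hxstar
    have h2 : kleinDist (x 0) xstar ≤ r := by rw [hx0]; exact hxstar.2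
    have h3 : f (x 0) - f xstar ≤ M * kleinDist (x 0) xstar := le_trans (le_abs_self _) h1
    have h4 : M * kleinDist (x 0) xstar ≤ M * r := mul_le_mul_of_nonneg_left h2 hM.le
    simp only [hδdef]
    linarith
  have hpow : (1 - q) ^ T ≤ ε / 2 := by
    have h1q : (0:ℝ) ≤ 1 - q := by linarith
    have hexp : (1 - q) ≤ Real.exp (-q) := by
      have := Real.add_one_le_exp (-q)
      linarith
    have h1 : (1 - q) ^ T ≤ Real.exp (-q) ^ T := pow_le_pow_left₀ h1q hexp T
    have h2 : Real.exp (-q) ^ T = Real.exp (T * (-q)) := (Real.exp_nat_mul _ T).symm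
    have hL : Real.log (2 / ε) ≤ q * T := by
      have h3 : q * ((2 * r / R) * Real.log (2 / ε)) ≤ q * T :=
        mul_le_mul_of_nonneg_left hT hq0.le
      have h4 : q * ((2 * r / R) * Real.log (2 / ε)) = Real.log (2 / ε) := by
        rw [hqdef, ← mul_assoc, div_mul_div_comm, mul_comm R (2 * r), div_self (by positivity), one_mul]
      linarith
    have h5 : Real.exp (T * (-q)) ≤ Real.exp (-Real.log (2 / ε)) := by
      apply Real.exp_le_exp.2
      nlinarith
    have h6 : Real.exp (-Real.log (2 / ε)) = ε / 2 := by
      rw [← Real.log_inv, Real.exp_log (by positivity)]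
      rw [inv_div]
    linarith
  have hcq : c / q = ε * M * r / 2 := by
    rw [hcdef, hqdef]
    field_simp
    ring
  have hfinal := hiter T
  have h7 : (1 - q) ^ T * δ 0 ≤ (ε / 2) * (M * r) := by
    have h8 : (0:ℝ) ≤ (1 - q) ^ T := pow_nonneg (by linarith) T
    have := mul_le_mul hpow hδ0 (hδnn 0) (by positivity : (0:ℝ) ≤ ε / 2)
    linarith
  have hfin2 : δ T ≤ ε / 2 * (M * r) + ε * M * r / 2 := by
    rw [hcq] at hfinal
    linarith
  have heq : ε / 2 * (M * r) + ε * M * r / 2 = ε * M * r := by ring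
  have hfin3 : δ T ≤ ε * M * r := hfin2.trans_eq heq
  simpa [hδdef] using hfin3
end
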